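/- arXiv:1704.04146 — 6 statements merged into one kernel-verified Lean document; each statement's English description precedes it below -/
import Mathlib

section
/- Let X_2, X_3, X_4 be i.i.d. random variables uniformly distributed on the interval [a,b] with a < b, and define f_X̃(x) = 2 f(x) P(X_3 + X_4 < x + X_2), where f(x) = 1/(b−a) for a ≤ x ≤ b is the uniform density. Then for all x with a ≤ x ≤ b, f_X̃(x) = (−2/(3(a−b)^4)) x^3 + ((a+b)/(a−b)^4) x^2 + ((a^2 − 4ab + b^2)/(a−b)^4) x + (−5a^3 + 12a^2 b − 6ab^2 + b^3)/(3(a−b)^4). In particular, f_X̃ is a probability density on [a,b]. -/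
open MeasureTheory ProbabilityTheory Set

private lemma uad_ofReal_max0 (x : ℝ) : ENNReal.ofReal x = ENNReal.ofReal (max x 0) := by
  rcases le_total x 0 with h | h
  · rw [ENNReal.ofReal_eq_zero.2 h, max_eq_right h, ENNReal.ofReal_zero]
  · rw [max_eq_left h]

private lemma uad_int_sq_shift (c d k : ℝ) :
    ∫ u in c..d, (u + k)^2 = ((d+k)^3 - (c+k)^3)/3 := by
  rw [intervalIntegral.integral_comp_add_right (fun u => u^2) k, integral_pow]
  norm_num
private lemma uad_inner (a b s : ℝ) (hab : a < b) (h1 : 2*a ≤ s) (h2 : s ≤ 2*b) :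
    ∫ t in Set.Icc a b, max (min (s - t) b - a) 0
      = (s - 2*a)^2/2 - (max (s - a - b) 0)^2 := by
  have hab' := hab.le
  have hcont : Continuous (fun t : ℝ => max (min (s - t) b - a) 0) := by fun_prop
  rw [MeasureTheory.integral_Icc_eq_integral_Ioc, ← intervalIntegral.integral_of_le hab']
  rcases le_total s (a+b) with hs | hs
  · have hmax : max (s - a - b) 0 = 0 := max_eq_right (by linarith)
    have hc : a ≤ s - a := by linarith
    have hc' : s - a ≤ b := by linarith
    rw [hmax, ← intervalIntegral.integral_add_adjacent_intervals (a := a) (b := s-a) (c := b)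
      (hcont.intervalIntegrable _ _) (hcont.intervalIntegrable _ _)]
    have e1 : ∫ t in a..(s-a), max (min (s - t) b - a) 0 = ∫ t in a..(s-a), (s - a - t) := by
      apply intervalIntegral.integral_congr
      intro t ht
      rw [Set.uIcc_of_le hc] at ht
      show max (min (s - t) b - a) 0 = s - a - t
      rw [min_eq_left (show s - t ≤ b by linarith [ht.1])]
      rw [max_eq_left (show 0 ≤ s - t - a by linarith [ht.2])]; ring
    have e2 : ∫ t in (s-a)..b, max (min (s - t) b - a) 0 = 0 := by
      have hz : ∫ t in (s-a)..b, max (min (s - t) b - a) 0 = ∫ _t in (s-a)..b, (0:ℝ) := by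
        apply intervalIntegral.integral_congr
        intro t ht
        rw [Set.uIcc_of_le hc'] at ht
        show max (min (s - t) b - a) 0 = 0
        rw [min_eq_left (show s - t ≤ b by linarith [ht.1])]
        exact max_eq_right (show s - t - a ≤ 0 by linarith [ht.1])
      rw [hz]; simp
    have e3 : ∫ t in a..(s-a), (s - a - t) = ((s-a)-a) • (s-a) - ((s-a)^2 - a^2)/2 := by
      rw [intervalIntegral.integral_sub intervalIntegrable_const intervalIntegral.intervalIntegrable_id,
        intervalIntegral.integral_const, integral_id]
    rw [e1, e2, e3]
    simp only [smul_eq_mul]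
    ring
  · have hmax : max (s - a - b) 0 = s - a - b := max_eq_left (by linarith)
    have hc : a ≤ s - b := by linarith
    have hc' : s - b ≤ b := by linarith
    rw [hmax, ← intervalIntegral.integral_add_adjacent_intervals (a := a) (b := s-b) (c := b)
      (hcont.intervalIntegrable _ _) (hcont.intervalIntegrable _ _)]
    have e1 : ∫ t in a..(s-b), max (min (s - t) b - a) 0 = ∫ _t in a..(s-b), (b - a) := by
      apply intervalIntegral.integral_congr
      intro t ht
      rw [Set.uIcc_of_le hc] at ht
      show max (min (s - t) b - a) 0 = b - a
      rw [min_eq_right (show b ≤ s - t by linarith [ht.2])]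
      exact max_eq_left (show 0 ≤ b - a by linarith)
    have e2 : ∫ t in (s-b)..b, max (min (s - t) b - a) 0 = ∫ t in (s-b)..b, (s - a - t) := by
      apply intervalIntegral.integral_congr
      intro t ht
      rw [Set.uIcc_of_le hc'] at ht
      show max (min (s - t) b - a) 0 = s - a - t
      rw [min_eq_left (show s - t ≤ b by linarith [ht.1])]
      rw [max_eq_left (show 0 ≤ s - t - a by linarith [ht.2])]; ring
    have e3 : ∫ t in (s-b)..b, (s - a - t) = (b-(s-b)) • (s-a) - (b^2 - (s-b)^2)/2 := by
      rw [intervalIntegral.integral_sub intervalIntegrable_const intervalIntegral.intervalIntegrable_id,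
        intervalIntegral.integral_const, integral_id]
    rw [e1, e2, e3, intervalIntegral.integral_const]
    simp only [smul_eq_mul]
    ring

private lemma uad_outer (a b x : ℝ) (hab : a < b) (h1 : a ≤ x) (h2 : x ≤ b) :
    ∫ u in Set.Icc a b, ((x + u - 2*a)^2/2 - (max (x + u - a - b) 0)^2)
      = ((x + b - 2*a)^3 - 3*(x - a)^3)/6 := by
  have hab' := hab.le
  have hcont : Continuous (fun u : ℝ => (x + u - 2*a)^2/2 - (max (x + u - a - b) 0)^2) := by
    fun_prop
  rw [MeasureTheory.integral_Icc_eq_integral_Ioc, ← intervalIntegral.integral_of_le hab']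
  set u₀ := a + b - x with hu₀
  have hc : a ≤ u₀ := by simp [hu₀]; linarith
  have hc' : u₀ ≤ b := by simp [hu₀]; linarith
  rw [← intervalIntegral.integral_add_adjacent_intervals (a := a) (b := u₀) (c := b)
    (hcont.intervalIntegrable _ _) (hcont.intervalIntegrable _ _)]
  have e1 : ∫ u in a..u₀, ((x + u - 2*a)^2/2 - (max (x + u - a - b) 0)^2)
      = ∫ u in a..u₀, (u + (x - 2*a))^2/2 := by
    apply intervalIntegral.integral_congr
    intro u hu
    rw [Set.uIcc_of_le hc] at hu
    show (x + u - 2*a)^2/2 - (max (x + u - a - b) 0)^2 = (u + (x - 2*a))^2/2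
    have hm : max (x + u - a - b) 0 = 0 := max_eq_right (by simp only [hu₀] at hu; linarith [hu.2])
    rw [hm]
    ring
  have e2 : ∫ u in u₀..b, ((x + u - 2*a)^2/2 - (max (x + u - a - b) 0)^2)
      = ∫ u in u₀..b, ((u + (x - 2*a))^2/2 - (u + (x - a - b))^2) := by
    apply intervalIntegral.integral_congr
    intro u hu
    rw [Set.uIcc_of_le hc'] at hu
    show (x + u - 2*a)^2/2 - (max (x + u - a - b) 0)^2 = (u + (x - 2*a))^2/2 - (u + (x - a - b))^2
    have hm : max (x + u - a - b) 0 = x + u - a - b := max_eq_left (by simp only [hu₀] at hu; linarith [hu.1])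
    rw [hm]
    ring
  have v1 : ∫ u in a..u₀, (u + (x - 2*a))^2/2 = ((u₀ + (x-2*a))^3 - (a + (x-2*a))^3)/3/2 := by
    rw [intervalIntegral.integral_div, uad_int_sq_shift]
  have v2 : ∫ u in u₀..b, ((u + (x - 2*a))^2/2 - (u + (x - a - b))^2)
      = ((b + (x-2*a))^3 - (u₀ + (x-2*a))^3)/3/2 - ((b + (x-a-b))^3 - (u₀ + (x-a-b))^3)/3 := by
    rw [intervalIntegral.integral_sub (Continuous.intervalIntegrable (by fun_prop) _ _) (Continuous.intervalIntegrable (by fun_prop) _ _),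
      intervalIntegral.integral_div, uad_int_sq_shift, uad_int_sq_shift]
  rw [e1, e2, v1, v2, hu₀]
  ring
private lemma uad_prob {Ω : Type*} [MeasurableSpace Ω]
    (P : Measure Ω) [IsProbabilityMeasure P]
    (a b : ℝ) (hab : a < b)
    (X₂ X₃ X₄ : Ω → ℝ)
    (hX₂ : Measurable X₂) (hX₃ : Measurable X₃) (hX₄ : Measurable X₄)
    (f : ℝ → ℝ)
    (hf : f = Set.indicator (Set.Icc a b) (fun _ => 1 / (b - a)))
    (hlaw₂ : P.map X₂ = MeasureTheory.volume.withDensity (fun t => ENNReal.ofReal (f t)))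
    (hlaw₃ : P.map X₃ = MeasureTheory.volume.withDensity (fun t => ENNReal.ofReal (f t)))
    (hlaw₄ : P.map X₄ = MeasureTheory.volume.withDensity (fun t => ENNReal.ofReal (f t)))
    (hindep : iIndepFun ![X₂, X₃, X₄] P)
    (x : ℝ) (hx1 : a ≤ x) (hx2 : x ≤ b) :
    P {ω | X₃ ω + X₄ ω < x + X₂ ω}
      = ENNReal.ofReal (1/(b-a)) * (ENNReal.ofReal (1/(b-a)) * (ENNReal.ofReal (1/(b-a))
        * ENNReal.ofReal (((x + b - 2*a)^3 - 3*(x - a)^3)/6))) := by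
  have hL0 : (0:ℝ) < b - a := sub_pos.2 hab
  set μ : Measure ℝ := ENNReal.ofReal (1/(b-a)) • volume.restrict (Set.Icc a b) with hμdef
  have hμ : volume.withDensity (fun t => ENNReal.ofReal (f t)) = μ := by
    rw [hf]
    have h1 : (fun t => ENNReal.ofReal (Set.indicator (Set.Icc a b) (fun _ => 1/(b-a)) t))
        = (Set.Icc a b).indicator (fun _ => ENNReal.ofReal (1/(b-a))) := by
      funext t
      by_cases h : t ∈ Set.Icc a b <;> simp [h]
    rw [h1, MeasureTheory.withDensity_indicator measurableSet_Icc, withDensity_const]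
  rw [hμ] at hlaw₂ hlaw₃ hlaw₄
  haveI hprobμ : IsProbabilityMeasure μ := by
    rw [← hlaw₂]; exact Measure.isProbabilityMeasure_map hX₂.aemeasurable
  -- uniform CDF
  have hcdf : ∀ s : ℝ, μ (Set.Iio s)
      = ENNReal.ofReal (1/(b-a)) * ENNReal.ofReal (max (min s b - a) 0) := by
    intro s
    have hvol : volume (Set.Iio s ∩ Set.Icc a b) = ENNReal.ofReal (min s b - a) := by
      rcases le_or_gt s b with h | h
      · have he : Set.Iio s ∩ Set.Icc a b = Set.Ico a s := by
          ext t
          simp only [Set.mem_inter_iff, Set.mem_Iio, Set.mem_Icc, Set.mem_Ico]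
          exact ⟨fun h' => ⟨h'.2.1, h'.1⟩, fun h' => ⟨h'.2, h'.1, h'.2.le.trans h⟩⟩
        rw [he, Real.volume_Ico, min_eq_left h]
      · have he : Set.Iio s ∩ Set.Icc a b = Set.Icc a b := by
          rw [Set.inter_eq_right]
          exact fun t ht => lt_of_le_of_lt ht.2 h
        rw [he, Real.volume_Icc, min_eq_right h.le]
    rw [hμdef, Measure.smul_apply, Measure.restrict_apply measurableSet_Iio, hvol, smul_eq_mul,
      uad_ofReal_max0 (min s b - a)]
  -- independence facts
  have hmeas : ∀ i : Fin 3, Measurable (![X₂, X₃, X₄] i) := by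
    intro i; fin_cases i
    · exact hX₂
    · exact hX₃
    · exact hX₄
  have ind34_2 : IndepFun (fun ω => (X₃ ω, X₄ ω)) X₂ P := by
    have h := hindep.indepFun_prodMk hmeas 1 2 0 (by decide) (by decide)
    simpa using h
  have ind2Y : IndepFun X₂ (fun ω => X₃ ω + X₄ ω) P := by
    have h := ind34_2.symm.comp measurable_id (measurable_fst.add measurable_snd)
    exact h
  have ind34 : IndepFun X₃ X₄ P := by
    have h := hindep.indepFun (i := 1) (j := 2) (by decide)
    simpa using h
  -- laws
  have hmap34 : P.map (fun ω => (X₃ ω, X₄ ω)) = μ.prod μ := by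
    rw [(indepFun_iff_map_prod_eq_prod_map_map hX₃.aemeasurable hX₄.aemeasurable).1 ind34,
      hlaw₃, hlaw₄]
  have haddm : Measurable (fun p : ℝ × ℝ => p.1 + p.2) := measurable_fst.add measurable_snd
  set ν : Measure ℝ := (μ.prod μ).map (fun p : ℝ × ℝ => p.1 + p.2) with hνdef
  haveI : IsProbabilityMeasure ν := Measure.isProbabilityMeasure_map haddm.aemeasurable
  have hmapY : P.map (fun ω => X₃ ω + X₄ ω) = ν := by
    rw [hνdef, ← hmap34, Measure.map_map haddm (hX₃.prodMk hX₄)]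
    rfl
  -- the event probability as double integral
  have hS : MeasurableSet {p : ℝ × ℝ | p.2 < x + p.1} :=
    measurableSet_lt measurable_snd (measurable_const.add measurable_fst)
  have hPev : P {ω | X₃ ω + X₄ ω < x + X₂ ω} = (μ.prod ν) {p : ℝ × ℝ | p.2 < x + p.1} := by
    have hpre : {ω | X₃ ω + X₄ ω < x + X₂ ω}
        = (fun ω => (X₂ ω, X₃ ω + X₄ ω)) ⁻¹' {p : ℝ × ℝ | p.2 < x + p.1} := rfl
    rw [hpre, ← Measure.map_apply (hX₂.prodMk (show Measurable (fun ω => X₃ ω + X₄ ω) from hX₃.add hX₄)) hS,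
      (indepFun_iff_map_prod_eq_prod_map_map hX₂.aemeasurable (show Measurable (fun ω => X₃ ω + X₄ ω) from hX₃.add hX₄).aemeasurable).1 ind2Y,
      hlaw₂, hmapY]
  have hv : (μ.prod ν) {p : ℝ × ℝ | p.2 < x + p.1} = ∫⁻ u, ν (Set.Iio (x + u)) ∂μ := by
    rw [Measure.prod_apply hS]
    apply lintegral_congr
    intro u
    congr 1
  -- CDF of the sum
  have hν : ∀ s : ℝ, ν (Set.Iio s)
      = ENNReal.ofReal (1/(b-a)) * (ENNReal.ofReal (1/(b-a))
         * ENNReal.ofReal (∫ t in Set.Icc a b, max (min (s - t) b - a) 0)) := by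
    intro s
    have hg : ∀ t : ℝ, Continuous (fun t : ℝ => max (min (s - t) b - a) 0) := by
      intro t; fun_prop
    rw [hνdef, Measure.map_apply haddm measurableSet_Iio,
      Measure.prod_apply (haddm measurableSet_Iio)]
    have step1 : ∫⁻ t, μ (Prod.mk t ⁻¹' ((fun p : ℝ × ℝ => p.1 + p.2) ⁻¹' Set.Iio s)) ∂μ
        = ∫⁻ t, ENNReal.ofReal (1/(b-a)) * ENNReal.ofReal (max (min (s - t) b - a) 0) ∂μ := by
      apply lintegral_congr
      intro t
      have hpre : Prod.mk t ⁻¹' ((fun p : ℝ × ℝ => p.1 + p.2) ⁻¹' Set.Iio s)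
          = Set.Iio (s - t) := by
        ext w
        simp [lt_sub_iff_add_lt']
      rw [hpre, hcdf]
    rw [step1, lintegral_const_mul _ ((hg 0).measurable.ennreal_ofReal), hμdef,
      lintegral_smul_measure,
      ← MeasureTheory.ofReal_integral_eq_lintegral_ofReal
        ((hg 0).integrableOn_Icc) (ae_of_all _ fun t => le_max_right _ _), smul_eq_mul]
  rw [hPev, hv]
  have hHc : Continuous (fun u : ℝ => (x + u - 2*a)^2/2 - (max (x + u - a - b) 0)^2) := by
    fun_prop
  have step2 : ∫⁻ u, ν (Set.Iio (x + u)) ∂μ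
      = ENNReal.ofReal (1/(b-a)) * ∫⁻ u in Set.Icc a b, ν (Set.Iio (x + u)) ∂volume := by
    rw [hμdef, lintegral_smul_measure, smul_eq_mul]
  rw [step2]
  congr 1
  have step3 : ∫⁻ u in Set.Icc a b, ν (Set.Iio (x + u)) ∂volume
      = ∫⁻ u in Set.Icc a b, ENNReal.ofReal (1/(b-a)) * (ENNReal.ofReal (1/(b-a))
          * ENNReal.ofReal ((x + u - 2*a)^2/2 - (max (x + u - a - b) 0)^2)) ∂volume := by
    apply setLIntegral_congr_fun measurableSet_Icc
    intro u hu
    dsimp only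
    rw [hν (x + u), uad_inner a b (x+u) hab (by linarith [hu.1, hx1]) (by linarith [hu.2, hx2])]
  have hHnn : 0 ≤ᵐ[volume.restrict (Set.Icc a b)]
      (fun u : ℝ => (x + u - 2*a)^2/2 - (max (x + u - a - b) 0)^2) := by
    refine (ae_restrict_iff' measurableSet_Icc).2 (ae_of_all _ fun u hu => ?_)
    show 0 ≤ (x + u - 2*a)^2/2 - (max (x + u - a - b) 0)^2
    rw [← uad_inner a b (x+u) hab (by linarith [hu.1, hx1]) (by linarith [hu.2, hx2])]
    exact MeasureTheory.setIntegral_nonneg measurableSet_Icc (fun t _ => le_max_right _ _)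
  rw [step3]
  rw [lintegral_const_mul _ (hHc.measurable.ennreal_ofReal.const_mul _)]
  rw [lintegral_const_mul _ hHc.measurable.ennreal_ofReal]
  rw [← MeasureTheory.ofReal_integral_eq_lintegral_ofReal hHc.integrableOn_Icc hHnn]
  rw [uad_outer a b x hab hx1 hx2]

/-- The addend density of the maximum of two sums of two i.i.d. `U(a,b)`
variables: `2 f(x) P(X₃ + X₄ < x + X₂)` equals the stated cubic polynomial
on `[a,b]`, and this polynomial is a probability density on `[a,b]`. -/
theorem uniform_addend_distribution
    {Ω : Type*} [MeasurableSpace Ω] (P : Measure Ω) [IsProbabilityMeasure P]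
    (a b : ℝ) (hab : a < b)
    (X₂ X₃ X₄ : Ω → ℝ)
    (hX₂ : Measurable X₂) (hX₃ : Measurable X₃) (hX₄ : Measurable X₄)
    (f : ℝ → ℝ)
    (hf : f = Set.indicator (Set.Icc a b) (fun _ => 1 / (b - a)))
    (hlaw₂ : P.map X₂ = MeasureTheory.volume.withDensity
      (fun t => ENNReal.ofReal (f t)))
    (hlaw₃ : P.map X₃ = MeasureTheory.volume.withDensity
      (fun t => ENNReal.ofReal (f t)))
    (hlaw₄ : P.map X₄ = MeasureTheory.volume.withDensity
      (fun t => ENNReal.ofReal (f t)))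
    (hindep : iIndepFun ![X₂, X₃, X₄] P) :
    (∀ x, a ≤ x → x ≤ b →
      2 * f x * (P {ω | X₃ ω + X₄ ω < x + X₂ ω}).toReal
        = (-2 / (3 * (a - b) ^ 4)) * x ^ 3
          + ((a + b) / (a - b) ^ 4) * x ^ 2
          + ((a ^ 2 - 4 * a * b + b ^ 2) / (a - b) ^ 4) * x
          + (-5 * a ^ 3 + 12 * a ^ 2 * b - 6 * a * b ^ 2 + b ^ 3)
            / (3 * (a - b) ^ 4))
    ∧ (∀ x ∈ Set.Icc a b, 0 ≤
        (-2 / (3 * (a - b) ^ 4)) * x ^ 3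
          + ((a + b) / (a - b) ^ 4) * x ^ 2
          + ((a ^ 2 - 4 * a * b + b ^ 2) / (a - b) ^ 4) * x
          + (-5 * a ^ 3 + 12 * a ^ 2 * b - 6 * a * b ^ 2 + b ^ 3)
            / (3 * (a - b) ^ 4))
    ∧ ∫ x in Set.Icc a b,
        ((-2 / (3 * (a - b) ^ 4)) * x ^ 3
          + ((a + b) / (a - b) ^ 4) * x ^ 2
          + ((a ^ 2 - 4 * a * b + b ^ 2) / (a - b) ^ 4) * x
          + (-5 * a ^ 3 + 12 * a ^ 2 * b - 6 * a * b ^ 2 + b ^ 3)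
            / (3 * (a - b) ^ 4)) = 1 := by
  have hL0 : (0:ℝ) < b - a := sub_pos.2 hab
  have hba : (b - a) ≠ 0 := ne_of_gt hL0
  have hab4 : ((a-b):ℝ) ≠ 0 := sub_ne_zero.2 hab.ne
  refine ⟨?_, ?_, ?_⟩
  · intro x hx1 hx2
    have hP := uad_prob P a b hab X₂ X₃ X₄ hX₂ hX₃ hX₄ f hf hlaw₂ hlaw₃ hlaw₄ hindep x hx1 hx2
    have hp1 : (0:ℝ) ≤ x - a := sub_nonneg.2 hx1
    have hp2 : (0:ℝ) ≤ b - x := sub_nonneg.2 hx2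
    have hK : 0 ≤ ((x + b - 2*a)^3 - 3*(x - a)^3)/6 := by
      nlinarith [mul_nonneg (mul_nonneg hp1 hp1) hp1, mul_nonneg (mul_nonneg hp1 hp1) hp2,
        mul_nonneg (mul_nonneg hp1 hp2) hp2, mul_nonneg (mul_nonneg hp2 hp2) hp2]
    have hfx : f x = 1/(b-a) := by
      rw [hf]; exact Set.indicator_of_mem (Set.mem_Icc.2 ⟨hx1, hx2⟩) _
    have h1L : (0:ℝ) ≤ 1/(b-a) := one_div_nonneg.2 hL0.le
    rw [hP, hfx]
    simp only [ENNReal.toReal_mul, ENNReal.toReal_ofReal h1L, ENNReal.toReal_ofReal hK]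
    field_simp
    ring
  · rintro x ⟨hx1, hx2⟩
    have hp1 : (0:ℝ) ≤ x - a := sub_nonneg.2 hx1
    have hp2 : (0:ℝ) ≤ b - x := sub_nonneg.2 hx2
    have key : (-2 / (3 * (a - b) ^ 4)) * x ^ 3
          + ((a + b) / (a - b) ^ 4) * x ^ 2
          + ((a ^ 2 - 4 * a * b + b ^ 2) / (a - b) ^ 4) * x
          + (-5 * a ^ 3 + 12 * a ^ 2 * b - 6 * a * b ^ 2 + b ^ 3)
            / (3 * (a - b) ^ 4)
        = ((x + b - 2*a)^3 - 3*(x - a)^3) / (3*(b-a)^4) := by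
      field_simp
      ring
    rw [key]
    apply div_nonneg _ (by positivity)
    nlinarith [mul_nonneg (mul_nonneg hp1 hp1) hp1, mul_nonneg (mul_nonneg hp1 hp1) hp2,
      mul_nonneg (mul_nonneg hp1 hp2) hp2, mul_nonneg (mul_nonneg hp2 hp2) hp2]
  · rw [MeasureTheory.integral_Icc_eq_integral_Ioc, ← intervalIntegral.integral_of_le hab.le]
    have i3 : IntervalIntegrable (fun x : ℝ => (-2 / (3 * (a - b) ^ 4)) * x ^ 3) volume a b :=
      Continuous.intervalIntegrable (by fun_prop) _ _
    have i2 : IntervalIntegrable (fun x : ℝ => ((a + b) / (a - b) ^ 4) * x ^ 2) volume a b :=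
      Continuous.intervalIntegrable (by fun_prop) _ _
    have i1 : IntervalIntegrable
        (fun x : ℝ => ((a ^ 2 - 4 * a * b + b ^ 2) / (a - b) ^ 4) * x) volume a b :=
      Continuous.intervalIntegrable (by fun_prop) _ _
    have i0 : IntervalIntegrable
        (fun _ : ℝ => (-5 * a ^ 3 + 12 * a ^ 2 * b - 6 * a * b ^ 2 + b ^ 3)
          / (3 * (a - b) ^ 4)) volume a b :=
      intervalIntegrable_const
    rw [intervalIntegral.integral_add ((i3.add i2).add i1) i0,
      intervalIntegral.integral_add (i3.add i2) i1,
      intervalIntegral.integral_add i3 i2,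
      intervalIntegral.integral_const_mul, intervalIntegral.integral_const_mul,
      intervalIntegral.integral_const_mul, integral_pow, integral_pow, integral_id,
      intervalIntegral.integral_const]
    push_cast
    have h4 : (a - b) ^ 4 ≠ 0 := pow_ne_zero _ hab4
    simp only [smul_eq_mul]
    field_simp
    ring
end

section
/- Let X_2, X_3, X_4 be i.i.d. random variables uniformly distributed on [0,1]. Then for all x with 0 < x ≤ 1, 2 · P(X_3 · X_4 < x · X_2) = −x log x + (3/2) x, where log is the natural logarithm. In particular, the function x ↦ −x log x + (3/2)x is a probability density on (0,1]. -/
open MeasureTheory ProbabilityTheory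
open MeasureTheory Set

lemma Fcont : Continuous (fun t : ℝ => t^2/2 * Real.log t - t^2/4) := by
  have hEq : (fun t : ℝ => t^2/2 * Real.log t - t^2/4)
      = fun t : ℝ => (t/2) * (t * Real.log t) - t^2/4 := by
    funext t; ring
  rw [hEq]
  exact ((continuous_id.div_const 2).mul Real.continuous_mul_log).sub
    ((continuous_pow 2).div_const 4)

lemma intlog : ∫ x in Set.Ioc (0:ℝ) 1, x * Real.log x = -(1/4) := by
  rw [← intervalIntegral.integral_of_le zero_le_one]
  have h := intervalIntegral.integral_eq_sub_of_hasDerivAt_of_le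
    (f := fun y : ℝ => y^2/2 * Real.log y - y^2/4)
    (f' := fun y : ℝ => y * Real.log y) zero_le_one
    Fcont.continuousOn
    (fun y hy => ?_) (Real.continuous_mul_log.intervalIntegrable 0 1)
  · rw [h]; simp
  · have h1 : HasDerivAt (fun t : ℝ => t^2/2 * Real.log t) (y * Real.log y + y/2) y := by
      have := ((hasDerivAt_pow 2 y).div_const 2).mul (Real.hasDerivAt_log (ne_of_gt hy.1))
      refine this.congr_deriv ?_
      have hy0 : y ≠ 0 := ne_of_gt hy.1
      norm_num
      field_simp
    have h2 : HasDerivAt (fun t : ℝ => t^2/4) (y/2) y := by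
      have := (hasDerivAt_pow 2 y).div_const 4
      refine this.congr_deriv ?_; norm_num; ring
    exact (h1.sub h2).congr_deriv (by ring)

lemma part2 : ∀ x ∈ Set.Ioc (0:ℝ) 1, 0 ≤ -x * Real.log x + (3 / 2) * x := by
  rintro x ⟨hx0, hx1⟩
  have hl : Real.log x ≤ 0 := Real.log_nonpos hx0.le hx1
  nlinarith

lemma part3 : ∫ x in Set.Ioc (0:ℝ) 1, (-x * Real.log x + (3 / 2) * x) = 1 := by
  have hint1 : IntegrableOn (fun x : ℝ => -x * Real.log x) (Set.Ioc 0 1) := by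
    have : Continuous (fun x : ℝ => -x * Real.log x) := by
      have := Real.continuous_mul_log.neg
      convert this using 1; funext t; simp only [Pi.neg_apply]; ring
    exact this.integrableOn_Ioc
  have hint2 : IntegrableOn (fun x : ℝ => (3/2 : ℝ) * x) (Set.Ioc (0:ℝ) 1) :=
    (continuous_const.mul continuous_id).integrableOn_Ioc
  rw [integral_add hint1 hint2]
  have h1 : ∫ x in Set.Ioc (0:ℝ) 1, -x * Real.log x = 1/4 := by
    have : ∀ x : ℝ, -x * Real.log x = -(x * Real.log x) := fun x => by ring
    simp_rw [this, integral_neg, intlog]; norm_num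
  have h2 : ∫ x in Set.Ioc (0:ℝ) 1, (3/2 : ℝ) * x = 3/4 := by
    rw [integral_const_mul, ← intervalIntegral.integral_of_le zero_le_one]
    norm_num
  rw [h1, h2]; norm_num

lemma lin_int (c a b : ℝ) (hab : a ≤ b) :
    ∫ v in Set.Ioc a b, (1 - c * v) = (b - a) - c*(b^2 - a^2)/2 := by
  rw [← intervalIntegral.integral_of_le hab]
  have h := intervalIntegral.integral_eq_sub_of_hasDerivAt
    (f := fun y : ℝ => y - c * y^2/2) (f' := fun y : ℝ => 1 - c * y)
    (fun y _ => ?_) (((continuous_const.sub (continuous_const.mul continuous_id)).intervalIntegrable a b))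
  · rw [h]; ring
  · have := (hasDerivAt_id y).sub (((hasDerivAt_pow 2 y).const_mul c).div_const 2)
    refine this.congr_deriv ?_
    norm_num; ring

lemma inner_int (x u : ℝ) (hx : 0 < x) (hu : 0 < u) (hu1 : u ≤ 1) :
    ∫ v in Set.Ioc (0:ℝ) 1, max 0 (1 - u*v/x)
      = if u ≤ x then 1 - u/(2*x) else x/(2*u) := by
  have hcont : Continuous (fun v : ℝ => max 0 (1 - u*v/x)) :=
    continuous_const.max (by continuity)
  split_ifs with h
  · have heq : Set.EqOn (fun v : ℝ => max 0 (1 - u*v/x)) (fun v => 1 - (u/x) * v)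
        (Set.Ioc 0 1) := by
      intro v hv
      have h1 : (u/x) * v ≤ 1 := by
        have : (u/x) * v ≤ u/x := by
          nlinarith [div_nonneg hu.le hx.le, hv.2, hv.1.le]
        exact this.trans (div_le_one_of_le₀ h (le_of_lt hx))
      have : u*v/x = (u/x)*v := by ring
      simp only [this]
      exact max_eq_right (by linarith)
    rw [setIntegral_congr_fun measurableSet_Ioc heq, lin_int _ _ _ zero_le_one]
    field_simp; ring
  · push_neg at h
    set t := x/u with ht
    have ht0 : 0 < t := div_pos hx hu
    have ht1 : t < 1 := (div_lt_one hu).mpr h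
    rw [← Set.Ioc_union_Ioc_eq_Ioc ht0.le ht1.le,
      setIntegral_union (Set.Ioc_disjoint_Ioc_of_le le_rfl) measurableSet_Ioc
        (hcont.integrableOn_Ioc) (hcont.integrableOn_Ioc)]
    have h1 : ∫ v in Set.Ioc 0 t, max 0 (1 - u*v/x) = ∫ v in Set.Ioc 0 t, (1 - (u/x) * v) := by
      refine setIntegral_congr_fun measurableSet_Ioc (fun v hv => ?_)
      have hv2 : v ≤ x/u := ht ▸ hv.2
      have h1 : (u/x) * v ≤ 1 := by
        rw [div_mul_eq_mul_div, div_le_one hx]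
        calc u * v ≤ u * (x/u) := by nlinarith [hv.1.le]
        _ = x := by field_simp
      have : u*v/x = (u/x)*v := by ring
      simp only [this]
      exact max_eq_right (by linarith)
    have h2 : ∫ v in Set.Ioc t 1, max 0 (1 - u*v/x) = 0 := by
      rw [setIntegral_congr_fun measurableSet_Ioc (g := fun _ => (0:ℝ)) (fun v hv => ?_)]
      · simp
      · have : 1 < u * v / x := by
          rw [lt_div_iff₀ hx, one_mul]
          calc x = u * t := by rw [ht]; field_simp
          _ < u * v := by exact (mul_lt_mul_iff_right₀ hu).mpr hv.1
        exact max_eq_left (by linarith)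
    rw [h1, h2, lin_int _ _ _ ht0.le]
    have hu0 : u ≠ 0 := hu.ne'
    have hx0 : x ≠ 0 := hx.ne'
    rw [ht]
    field_simp
    ring

lemma outer_int (x : ℝ) (hx : 0 < x) (hx1 : x ≤ 1) :
    ∫ u in Set.Ioc (0:ℝ) 1, (if u ≤ x then 1 - u/(2*x) else x/(2*u))
      = 3/4*x - x/2 * Real.log x := by
  have hx0 : x ≠ 0 := hx.ne'
  have heq1 : Set.EqOn (fun u : ℝ => if u ≤ x then 1 - u/(2*x) else x/(2*u))
      (fun u : ℝ => 1 - (1/(2*x)) * u) (Set.Ioc 0 x) := by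
    intro u hu
    simp only [if_pos hu.2]
    ring
  have heq2 : Set.EqOn (fun u : ℝ => if u ≤ x then 1 - u/(2*x) else x/(2*u))
      (fun u : ℝ => (x/2) * (1/u)) (Set.Ioc x 1) := by
    intro u hu
    simp only [if_neg (not_le.mpr hu.1)]
    ring
  have hI1 : IntegrableOn (fun u : ℝ => if u ≤ x then 1 - u/(2*x) else x/(2*u))
      (Set.Ioc 0 x) := by
    refine (IntegrableOn.congr_fun ?_ heq1.symm measurableSet_Ioc)
    exact (continuous_const.sub (continuous_const.mul continuous_id)).integrableOn_Ioc
  have hI2 : IntegrableOn (fun u : ℝ => if u ≤ x then 1 - u/(2*x) else x/(2*u))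
      (Set.Ioc x 1) := by
    refine (IntegrableOn.congr_fun ?_ heq2.symm measurableSet_Ioc)
    have hco : ContinuousOn (fun u : ℝ => (x/2) * (1/u)) (Set.Icc x 1) := by
      refine ContinuousOn.mul continuousOn_const (ContinuousOn.div continuousOn_const
        continuousOn_id (fun u hu => ?_))
      exact (lt_of_lt_of_le hx hu.1).ne'
    exact (hco.integrableOn_compact isCompact_Icc).mono_set Set.Ioc_subset_Icc_self
  rw [← Set.Ioc_union_Ioc_eq_Ioc hx.le hx1,
    setIntegral_union (Set.Ioc_disjoint_Ioc_of_le le_rfl) measurableSet_Ioc hI1 hI2,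
    setIntegral_congr_fun measurableSet_Ioc heq1,
    setIntegral_congr_fun measurableSet_Ioc heq2, lin_int _ _ _ hx.le]
  have h2 : ∫ u in Set.Ioc x 1, (x/2) * (1/u) = (x/2) * (- Real.log x) := by
    rw [integral_const_mul, ← intervalIntegral.integral_of_le hx1, integral_one_div]
    · rw [one_div, Real.log_inv]
    · intro hmem
      rcases hmem with ⟨h1, _⟩
      simp only [inf_le_iff] at h1
      rcases h1 with h1 | h1 <;> linarith
  rw [h2]
  field_simp
  ring

noncomputable abbrev ρ : Measure ℝ := volume.restrict (Set.Ioc (0:ℝ) 1)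

lemma maxcont (x : ℝ) (hx : 0 < x) : Continuous (fun p : ℝ × ℝ => max 0 (1 - p.1*p.2/x)) :=
  continuous_const.max (by continuity)

lemma J_integrable (x : ℝ) (hx : 0 < x) :
    Integrable (fun p : ℝ × ℝ => max 0 (1 - p.1*p.2/x)) (ρ.prod ρ) := by
  rw [ρ, Measure.prod_restrict]
  have hK : IsCompact (Set.Icc (0:ℝ) 1 ×ˢ Set.Icc (0:ℝ) 1) :=
    isCompact_Icc.prod isCompact_Icc
  refine (((maxcont x hx).continuousOn.integrableOn_compact hK).mono_set ?_)
  exact Set.prod_mono Set.Ioc_subset_Icc_self Set.Ioc_subset_Icc_self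

lemma J_val (x : ℝ) (hx : 0 < x) (hx1 : x ≤ 1) :
    ∫ p, max 0 (1 - p.1*p.2/x) ∂(ρ.prod ρ) = 3/4*x - x/2 * Real.log x := by
  rw [MeasureTheory.integral_prod _ (J_integrable x hx)]
  have : ∀ u ∈ Set.Ioc (0:ℝ) 1,
      (∫ v, max 0 (1 - u*v/x) ∂ρ) = (if u ≤ x then 1 - u/(2*x) else x/(2*u)) := by
    intro u hu
    exact inner_int x u hx hu.1 hu.2
  rw [show (∫ u, ∫ v, max 0 (1 - u*v/x) ∂ρ ∂ρ)
      = ∫ u in Set.Ioc (0:ℝ) 1, (if u ≤ x then 1 - u/(2*x) else x/(2*u)) from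
    setIntegral_congr_fun measurableSet_Ioc this]
  exact outer_int x hx hx1

lemma lint_val (x : ℝ) (hx : 0 < x) (hx1 : x ≤ 1) :
    ∫⁻ p, ENNReal.ofReal (1 - p.1*p.2/x) ∂(ρ.prod ρ)
      = ENNReal.ofReal (3/4*x - x/2 * Real.log x) := by
  have hmax : ∀ a : ℝ, ENNReal.ofReal a = ENNReal.ofReal (max 0 a) := by
    intro a
    rcases le_total 0 a with h | h
    · rw [max_eq_right h]
    · rw [max_eq_left h, ENNReal.ofReal_of_nonpos h, ENNReal.ofReal_zero]
  simp_rw [hmax (1 - _ * _ / x)]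
  rw [← ofReal_integral_eq_lintegral_ofReal (J_integrable x hx)
    (Filter.Eventually.of_forall (fun p => le_max_left _ _)), J_val x hx hx1]


/-- The factor density of the maximum of two products of two i.i.d. `U(0,1)`
variables: for `0 < x ≤ 1`, `2 P(X₃ X₄ < x X₂) = -x log x + (3/2) x`, and this
function is a probability density on `(0,1]`. -/
theorem uniform_factor_distribution
    {Ω : Type*} [MeasurableSpace Ω] (P : Measure Ω) [IsProbabilityMeasure P]
    (X₂ X₃ X₄ : Ω → ℝ)
    (hX₂ : Measurable X₂) (hX₃ : Measurable X₃) (hX₄ : Measurable X₄)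
    (hlaw₂ : P.map X₂ = MeasureTheory.volume.restrict (Set.Ioc (0:ℝ) 1))
    (hlaw₃ : P.map X₃ = MeasureTheory.volume.restrict (Set.Ioc (0:ℝ) 1))
    (hlaw₄ : P.map X₄ = MeasureTheory.volume.restrict (Set.Ioc (0:ℝ) 1))
    (hindep : iIndepFun ![X₂, X₃, X₄] P) :
    (∀ x : ℝ, 0 < x → x ≤ 1 →
      2 * (P {ω | X₃ ω * X₄ ω < x * X₂ ω}).toReal
        = -x * Real.log x + (3 / 2) * x)
    ∧ (∀ x ∈ Set.Ioc (0:ℝ) 1, 0 ≤ -x * Real.log x + (3 / 2) * x)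
    ∧ ∫ x in Set.Ioc (0:ℝ) 1, (-x * Real.log x + (3 / 2) * x) = 1 := by
  refine ⟨?_, part2, part3⟩
  intro x hx hx1
  have hm : ∀ i, Measurable (![X₂, X₃, X₄] i) := by
    intro i; fin_cases i <;> [exact hX₂; exact hX₃; exact hX₄]
  have h34 : IndepFun X₃ X₄ P := hindep.indepFun (show (1:Fin 3) ≠ 2 by decide)
  have hpair : IndepFun (fun ω => (X₃ ω, X₄ ω)) X₂ P :=
    hindep.indepFun_prodMk hm 1 2 0 (by decide) (by decide)
  have map34 : P.map (fun ω => (X₃ ω, X₄ ω)) = ρ.prod ρ := by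
    rw [(indepFun_iff_map_prod_eq_prod_map_map hX₃.aemeasurable hX₄.aemeasurable).mp h34,
      hlaw₃, hlaw₄]
  have hTm : Measurable (fun ω => ((X₃ ω, X₄ ω), X₂ ω)) :=
    (hX₃.prodMk hX₄).prodMk hX₂
  have hmapT : P.map (fun ω => ((X₃ ω, X₄ ω), X₂ ω)) = (ρ.prod ρ).prod ρ := by
    rw [(indepFun_iff_map_prod_eq_prod_map_map
        ((hX₃.prodMk hX₄)).aemeasurable hX₂.aemeasurable).mp hpair, map34, hlaw₂]
  set S : Set ((ℝ × ℝ) × ℝ) := {p | p.1.1 * p.1.2 < x * p.2} with hS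
  have hSm : MeasurableSet S :=
    measurableSet_lt (measurable_fst.fst.mul measurable_fst.snd)
      (measurable_const.mul measurable_snd)
  have hset : {ω | X₃ ω * X₄ ω < x * X₂ ω} = (fun ω => ((X₃ ω, X₄ ω), X₂ ω)) ⁻¹' S := rfl
  have hP : P {ω | X₃ ω * X₄ ω < x * X₂ ω} = ((ρ.prod ρ).prod ρ) S := by
    rw [hset, ← Measure.map_apply hTm hSm, hmapT]
  have hprod : ((ρ.prod ρ).prod ρ) S
      = ∫⁻ a, ρ (Prod.mk a ⁻¹' S) ∂(ρ.prod ρ) := Measure.prod_apply hSm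
  have hfiber : ∀ a : ℝ × ℝ, Prod.mk a ⁻¹' S = Set.Ioi (a.1 * a.2 / x) := by
    intro a
    ext w
    simp only [S, Set.mem_preimage, Set.mem_setOf_eq, Set.mem_Ioi]
    rw [div_lt_iff₀ hx, mul_comm w x]
  have hfib_meas : ∀ a : ℝ × ℝ, ρ (Prod.mk a ⁻¹' S)
      = ENNReal.ofReal (1 - max 0 (a.1 * a.2 / x)) := by
    intro a
    rw [hfiber a, ρ, Measure.restrict_apply measurableSet_Ioi, Set.inter_comm,
      Set.Ioc_inter_Ioi, Real.volume_Ioc]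
  have hlint : (∫⁻ a, ρ (Prod.mk a ⁻¹' S) ∂(ρ.prod ρ))
      = ∫⁻ a, ENNReal.ofReal (1 - a.1 * a.2 / x) ∂(ρ.prod ρ) := by
    simp_rw [hfib_meas]
    rw [ρ, Measure.prod_restrict]
    refine setLIntegral_congr_fun (measurableSet_Ioc.prod measurableSet_Ioc) ?_
    intro a ha
    dsimp only
    have h1 : 0 ≤ a.1 * a.2 / x :=
      div_nonneg (mul_nonneg ha.1.1.le ha.2.1.le) hx.le
    rw [max_eq_right h1]
  have key : P {ω | X₃ ω * X₄ ω < x * X₂ ω}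
      = ENNReal.ofReal (3/4*x - x/2 * Real.log x) := by
    rw [hP, hprod, hlint, lint_val x hx hx1]
  have hl : Real.log x ≤ 0 := Real.log_nonpos hx.le hx1
  have hnn : 0 ≤ 3/4*x - x/2 * Real.log x := by nlinarith
  rw [key, ENNReal.toReal_ofReal hnn]
  ring
end

section
/- Let σ > 0 and let X_2, X_3, X_4 be i.i.d. normal random variables with mean 0 and variance σ^2. Then for every real x, P(X_3 · X_4 < x · X_2) = 1/2. Consequently, the factor density of the maximum of two products of two i.i.d. N(0,σ^2) variables, f_X̃(x) = 2 φ(x) P(X_3 X_4 < x X_2), equals the parent density itself: f_X̃(x) = φ(x) = (2πσ^2)^{−1/2} exp(−x^2/(2σ^2)). -/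
open MeasureTheory ProbabilityTheory Real

/-- The factor density of the maximum of two products of two i.i.d. `N(0,σ²)`
variables: `P(X₃ X₄ < x X₂) = 1/2` for all `x`, so the factor density
`2 φ(x) P(X₃ X₄ < x X₂)` equals the parent density `φ` itself. -/
theorem normal_factor_distribution
    {Ω : Type*} [MeasurableSpace Ω] (P : Measure Ω) [IsProbabilityMeasure P]
    (σ : ℝ) (hσ : 0 < σ)
    (X₂ X₃ X₄ : Ω → ℝ)
    (hX₂ : Measurable X₂) (hX₃ : Measurable X₃) (hX₄ : Measurable X₄)
    (φ : ℝ → ℝ)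
    (hφ : φ = fun x =>
      (2 * π * σ ^ 2) ^ (-(1:ℝ)/2) * Real.exp (-x ^ 2 / (2 * σ ^ 2)))
    (hlaw₂ : P.map X₂ = MeasureTheory.volume.withDensity
      (fun t => ENNReal.ofReal (φ t)))
    (hlaw₃ : P.map X₃ = MeasureTheory.volume.withDensity
      (fun t => ENNReal.ofReal (φ t)))
    (hlaw₄ : P.map X₄ = MeasureTheory.volume.withDensity
      (fun t => ENNReal.ofReal (φ t)))
    (hindep : iIndepFun ![X₂, X₃, X₄] P) :
    ∀ x : ℝ,
      (P {ω | X₃ ω * X₄ ω < x * X₂ ω}).toReal = 1 / 2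
      ∧ 2 * φ x * (P {ω | X₃ ω * X₄ ω < x * X₂ ω}).toReal = φ x := by
  intro x
  -- identify the common law with a Gaussian measure
  set v : NNReal := ⟨σ ^ 2, sq_nonneg σ⟩ with hvdef
  have hv0 : v ≠ 0 := by
    intro h
    have : σ ^ 2 = 0 := congrArg NNReal.toReal h
    nlinarith
  have hφpdf : (fun t => ENNReal.ofReal (φ t)) = gaussianPDF 0 v := by
    funext t
    simp only [hφ, gaussianPDF, gaussianPDFReal, sub_zero, hvdef, NNReal.coe_mk]
    congr 2
    rw [Real.sqrt_eq_rpow]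
    change (2 * π * σ ^ 2) ^ (-1 / 2 : ℝ) = ((2 * π * σ ^ 2) ^ (1 / 2 : ℝ))⁻¹
    rw [← Real.rpow_neg (by positivity), neg_div]
  set ν : Measure ℝ := gaussianReal 0 v with hνdef
  have hν : MeasureTheory.volume.withDensity (fun t => ENNReal.ofReal (φ t)) = ν := by
    rw [hφpdf, hνdef, gaussianReal_of_var_ne_zero _ hv0]
  rw [hν] at hlaw₂ hlaw₃ hlaw₄
  -- symmetry of ν
  have hνneg : ν.map (fun y : ℝ => -y) = ν := by
    have := gaussianReal_map_const_mul (μ := 0) (v := v) (-1)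
    simp only [neg_one_mul, mul_zero, neg_zero] at this
    rw [hνdef]
    convert this using 3
    ext
    simp
  -- independence consequences
  have hmeas : ∀ i, Measurable (![X₂, X₃, X₄] i) := by
    intro i; fin_cases i <;> simpa
  have hi34 : IndepFun X₃ X₄ P := by
    have := hindep.indepFun (i := 1) (j := 2) (by decide)
    simpa using this
  have hiY2 : IndepFun (fun ω => (X₃ ω, X₄ ω)) X₂ P := by
    have := hindep.indepFun_prodMk hmeas 1 2 0 (by decide) (by decide)
    simpa using this
  have hY2 : IndepFun (fun ω => X₃ ω * X₄ ω) X₂ P :=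
    hiY2.comp (measurable_fst.mul measurable_snd) measurable_id
  -- joint law of (X₃, X₄)
  have hmap34 : P.map (fun ω => (X₃ ω, X₄ ω)) = ν.prod ν := by
    rw [(indepFun_iff_map_prod_eq_prod_map_map hX₃.aemeasurable hX₄.aemeasurable).mp hi34,
      hlaw₃, hlaw₄]
  -- law of the product
  have hmulmeas : Measurable (fun p : ℝ × ℝ => p.1 * p.2) :=
    measurable_fst.mul measurable_snd
  set τ : Measure ℝ := (ν.prod ν).map (fun p : ℝ × ℝ => p.1 * p.2) with hτdef
  have hmapmul : P.map (fun ω => X₃ ω * X₄ ω) = τ := by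
    rw [hτdef, ← hmap34, Measure.map_map hmulmeas (hX₃.prodMk hX₄)]
    rfl
  have : IsProbabilityMeasure (ν.prod ν) := by infer_instance
  have hτprob : IsProbabilityMeasure τ := Measure.isProbabilityMeasure_map hmulmeas.aemeasurable
  -- τ has no atoms
  have hνsing : ∀ r : ℝ, ν {r} = 0 := fun r =>
    gaussianReal_absolutelyContinuous 0 hv0 (measure_singleton r)
  have hτatom : ∀ c : ℝ, τ {c} = 0 := by
    intro c
    rw [hτdef, Measure.map_apply hmulmeas (measurableSet_singleton c),
      Measure.prod_apply (hmulmeas (measurableSet_singleton c))]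
    have hae : ∀ᵐ b ∂ν, ν (Prod.mk b ⁻¹' ((fun p : ℝ × ℝ => p.1 * p.2) ⁻¹' {c})) = 0 := by
      have hne : ∀ᵐ b ∂ν, b ≠ 0 := by
        rw [ae_iff]
        simpa using hνsing 0
      filter_upwards [hne] with b hb
      have hsub : (Prod.mk b ⁻¹' ((fun p : ℝ × ℝ => p.1 * p.2) ⁻¹' {c})) ⊆ {b⁻¹ * c} := by
        intro y hy
        simp only [Set.mem_preimage, Set.mem_singleton_iff] at hy ⊢
        field_simp [hb] at hy ⊢
        linarith [hy]
      exact measure_mono_null hsub (hνsing _)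
    rw [lintegral_congr_ae hae, lintegral_zero]
  -- symmetry of τ
  have hτneg : τ.map (fun y : ℝ => -y) = τ := by
    rw [hτdef, Measure.map_map (measurable_neg) hmulmeas]
    have hcomp : ((fun y : ℝ => -y) ∘ (fun p : ℝ × ℝ => p.1 * p.2))
        = (fun p : ℝ × ℝ => p.1 * p.2) ∘ (Prod.map (fun y : ℝ => -y) id) := by
      funext p; simp [Prod.map, neg_mul]
    rw [hcomp, ← Measure.map_map hmulmeas (measurable_neg.prodMap measurable_id),
      ← Measure.map_prod_map _ _ measurable_neg measurable_id, hνneg, Measure.map_id]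
  -- joint law of (X₂, X₃X₄)
  set m : Measure (ℝ × ℝ) := ν.prod τ with hmdef
  have hmjoint : P.map (fun ω => (X₂ ω, X₃ ω * X₄ ω)) = m := by
    rw [hmdef, ← hlaw₂, ← hmapmul]
    exact (indepFun_iff_map_prod_eq_prod_map_map hX₂.aemeasurable
      ((hX₃.mul hX₄).aemeasurable)).mp hY2.symm
  have hmprob : IsProbabilityMeasure m := by rw [hmdef]; infer_instance
  -- symmetry of m
  have hmneg : m.map (Prod.map (fun y : ℝ => -y) (fun y : ℝ => -y)) = m := by
    rw [hmdef, ← Measure.map_prod_map _ _ measurable_neg measurable_neg, hνneg, hτneg]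
  -- the events
  have hsetlt : MeasurableSet {p : ℝ × ℝ | p.2 < x * p.1} :=
    measurableSet_lt measurable_snd (measurable_const.mul measurable_fst)
  have hsetgt : MeasurableSet {p : ℝ × ℝ | x * p.1 < p.2} :=
    measurableSet_lt (measurable_const.mul measurable_fst) measurable_snd
  have hseteq : MeasurableSet {p : ℝ × ℝ | p.2 = x * p.1} :=
    measurableSet_eq_fun measurable_snd (measurable_const.mul measurable_fst)
  have hPev : P {ω | X₃ ω * X₄ ω < x * X₂ ω} = m {p : ℝ × ℝ | p.2 < x * p.1} := by
    rw [← hmjoint, Measure.map_apply (f := fun ω => (X₂ ω, X₃ ω * X₄ ω)) (hX₂.prodMk (hX₃.mul hX₄)) hsetlt]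
    rfl
  -- m{<} = m{>}
  have hltgt : m {p : ℝ × ℝ | p.2 < x * p.1} = m {p : ℝ × ℝ | x * p.1 < p.2} := by
    conv_lhs => rw [← hmneg]
    rw [Measure.map_apply (measurable_neg.prodMap measurable_neg) hsetlt]
    congr 1
    ext p
    simp only [Set.mem_preimage, Prod.map, Set.mem_setOf_eq]
    constructor
    · intro h; nlinarith
    · intro h; nlinarith
  -- boundary is null
  have hbdry : m {p : ℝ × ℝ | p.2 = x * p.1} = 0 := by
    rw [hmdef, Measure.prod_apply hseteq]
    have hae : ∀ᵐ a ∂ν, τ (Prod.mk a ⁻¹' {p : ℝ × ℝ | p.2 = x * p.1}) = 0 := by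
      refine ae_of_all _ fun a => ?_
      have : (Prod.mk a ⁻¹' {p : ℝ × ℝ | p.2 = x * p.1}) = {x * a} := by
        ext y; simp [Set.mem_preimage]
      rw [this]
      exact hτatom _
    rw [lintegral_congr_ae hae, lintegral_zero]
  -- add up
  have hunion : m {p : ℝ × ℝ | p.2 < x * p.1} + m {p : ℝ × ℝ | x * p.1 < p.2} = 1 := by
    have hdisj : Disjoint {p : ℝ × ℝ | p.2 < x * p.1} {p : ℝ × ℝ | x * p.1 < p.2} := by
      rw [Set.disjoint_left]
      intro p h1 h2
      simp only [Set.mem_setOf_eq] at h1 h2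
      linarith
    rw [← measure_union hdisj hsetgt]
    have hcompl : {p : ℝ × ℝ | p.2 < x * p.1} ∪ {p : ℝ × ℝ | x * p.1 < p.2}
        = {p : ℝ × ℝ | p.2 = x * p.1}ᶜ := by
      ext p
      simp only [Set.mem_union, Set.mem_setOf_eq, Set.mem_compl_iff]
      constructor
      · rintro (h | h) he <;> [exact absurd he (ne_of_lt h); exact absurd he.symm (ne_of_lt h)]
      · intro h
        rcases lt_trichotomy (p.2) (x * p.1) with h' | h' | h'
        · exact Or.inl h'
        · exact absurd h' h
        · exact Or.inr h'
    rw [hcompl, measure_compl hseteq (measure_ne_top m _), hbdry, tsub_zero, measure_univ]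
  have hhalf : (P {ω | X₃ ω * X₄ ω < x * X₂ ω}).toReal = 1 / 2 := by
    rw [hPev]
    rw [← hltgt] at hunion
    have hfin : m {p : ℝ × ℝ | p.2 < x * p.1} ≠ ⊤ := measure_ne_top m _
    have := congrArg ENNReal.toReal hunion
    rw [ENNReal.toReal_add hfin hfin, ENNReal.toReal_one] at this
    linarith
  refine ⟨hhalf, ?_⟩
  rw [hhalf]; ring
end

section
/- Let λ > 0 and let X_2, X_3, X_4 be i.i.d. exponential random variables with rate λ (density f(t) = λ e^{−λt} for t ≥ 0). Then for all x > 0, 2 f(x) P(X_3 · X_4 < x · X_2) = 2 λ^2 x E_1(λx), where E_1(x) = ∫_x^∞ e^{−t}/t dt is the exponential integral. In particular, x ↦ 2λ^2 x E_1(λx) is a probability density on (0, ∞). -/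
open MeasureTheory ProbabilityTheory

/-- The exponential integral `E₁(x) = ∫_x^∞ e^{-t}/t dt`. -/
noncomputable def expIntE1 (x : ℝ) : ℝ :=
  ∫ t in Set.Ioi x, Real.exp (-t) / t

section AuxE1
open Set Real
open scoped ENNReal

lemma integral_Ioi_comp_add (g : ℝ → ℝ) (a c : ℝ) :
    ∫ s in Ioi a, g (s + c) = ∫ t in Ioi (a + c), g t := by
  have h := (measurePreserving_add_right (volume : Measure ℝ) c).setIntegral_preimage_emb
    (MeasurableEquiv.addRight c).measurableEmbedding g (Ioi (a + c))
  have hpre : (· + c : ℝ → ℝ) ⁻¹' Ioi (a + c) = Ioi a := by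
    ext y; simp [Set.mem_Ioi]
  rw [← h, hpre]

lemma integral_exp_rate (c a : ℝ) (hc : 0 < c) :
    ∫ t in Ioi a, Real.exp (-(c * t)) = c⁻¹ * Real.exp (-(c * a)) := by
  have h := integral_comp_mul_left_Ioi (fun y => Real.exp (-y)) a hc
  simpa [smul_eq_mul, integral_exp_neg_Ioi, integral_exp_Iic] using h

lemma integrableOn_E1 {y : ℝ} (hy : 0 < y) :
    IntegrableOn (fun t => Real.exp (-t) / t) (Ioi y) := by
  refine Integrable.mono' ((exp_neg_integrableOn_Ioi y one_pos).const_mul y⁻¹) ?_ ?_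
  · exact ((measurable_exp.comp measurable_neg).div measurable_id).aestronglyMeasurable
  · refine (ae_restrict_iff' measurableSet_Ioi).2 (Filter.Eventually.of_forall fun t ht => ?_)
    have ht' : 0 < t := hy.trans ht
    rw [Real.norm_eq_abs, abs_of_nonneg (by positivity), div_le_iff₀ ht']
    have h1 : Real.exp (-1 * t) = Real.exp (-t) := by norm_num
    rw [h1]
    calc Real.exp (-t) = y⁻¹ * Real.exp (-t) * y := by field_simp
    _ ≤ y⁻¹ * Real.exp (-t) * t := by
        apply mul_le_mul_of_nonneg_left (le_of_lt ht); positivity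

lemma expIntE1_nonneg {y : ℝ} (hy : 0 ≤ y) : 0 ≤ expIntE1 y := by
  refine setIntegral_nonneg measurableSet_Ioi fun t ht => ?_
  have : 0 < t := lt_of_le_of_lt hy ht
  positivity

lemma measurable_expIntE1 : Measurable expIntE1 := by
  have hF : StronglyMeasurable fun p : ℝ × ℝ =>
      ({q : ℝ × ℝ | q.1 < q.2}.indicator (fun q => Real.exp (-q.2) / q.2)) p := by
    refine (Measurable.indicator ?_ (measurableSet_lt measurable_fst measurable_snd)).stronglyMeasurable
    exact (measurable_exp.comp measurable_snd.neg).div measurable_snd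
  have h := hF.integral_prod_right' (ν := (volume : Measure ℝ))
  have : expIntE1 = fun x => ∫ t, ({q : ℝ × ℝ | q.1 < q.2}.indicator (fun q => Real.exp (-q.2) / q.2)) (x, t) := by
    funext y
    rw [expIntE1]
    rw [← integral_indicator (measurableSet_Ioi (a := y))]
    congr 1
  rw [this]
  exact h.measurable

lemma realI {lam x : ℝ} (hlam : 0 < lam) (hx : 0 < x) :
    ∫ s in Ioi (0:ℝ), lam * Real.exp (-(lam * s)) * (x / (x + s))
      = lam * x * Real.exp (lam * x) * expIntE1 (lam * x) := by
  have h1 : expIntE1 (lam * x)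
      = ∫ s in Ioi (0:ℝ), Real.exp (-(s + lam * x)) / (s + lam * x) := by
    rw [expIntE1, ← zero_add (lam * x),
      ← integral_Ioi_comp_add (fun t => Real.exp (-t) / t) 0 (lam * x)]
    simp only [zero_add]
  have h2 : lam * x * Real.exp (lam * x) * expIntE1 (lam * x)
      = ∫ s in Ioi (0:ℝ), lam * x * Real.exp (-s) / (s + lam * x) := by
    rw [h1, ← integral_const_mul]
    refine setIntegral_congr_fun measurableSet_Ioi fun s hs => ?_
    have key : Real.exp (lam * x) * Real.exp (-(s + lam * x)) = Real.exp (-s) := by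
      rw [← Real.exp_add]; congr 1; ring
    calc lam * x * Real.exp (lam * x) * (Real.exp (-(s + lam * x)) / (s + lam * x))
        = lam * x * (Real.exp (lam * x) * Real.exp (-(s + lam * x))) / (s + lam * x) := by ring
      _ = lam * x * Real.exp (-s) / (s + lam * x) := by rw [key]
  rw [h2]
  have hs := integral_comp_mul_left_Ioi
    (fun s => lam * x * Real.exp (-s) / (s + lam * x)) 0 hlam
  rw [mul_zero, smul_eq_mul] at hs
  have : ∫ s in Ioi (0:ℝ), lam * x * Real.exp (-s) / (s + lam * x)
      = lam * ∫ u in Ioi (0:ℝ), lam * x * Real.exp (-(lam * u)) / (lam * u + lam * x) := by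
    rw [hs]; field_simp
  rw [this, ← integral_const_mul]
  refine setIntegral_congr_fun measurableSet_Ioi fun s hs' => ?_
  have hs0 : 0 < s := hs'
  field_simp
  ring


noncomputable def fexp (lam : ℝ) : ℝ → ℝ :=
  Set.indicator (Set.Ici 0) (fun t => lam * Real.exp (-(lam * t)))

noncomputable def muex (lam : ℝ) : Measure ℝ :=
  volume.withDensity (fun t => ENNReal.ofReal (fexp lam t))

lemma fexp_eq_pdf (lam : ℝ) :
    (fun t => ENNReal.ofReal (fexp lam t)) = exponentialPDF lam := by
  funext t
  rw [exponentialPDF_eq, fexp, Set.indicator_apply]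
  simp [Set.mem_Ici]

instance fact_prob (lam : ℝ) [Fact (0 < lam)] : IsProbabilityMeasure (muex lam) := by
  constructor
  rw [muex, withDensity_apply _ MeasurableSet.univ, Measure.restrict_univ, fexp_eq_pdf]
  exact lintegral_exponentialPDF_eq_one (Fact.out : 0 < lam)

lemma muex_Ioi {lam a : ℝ} (hlam : 0 < lam) (ha : 0 ≤ a) :
    muex lam (Ioi a) = ENNReal.ofReal (Real.exp (-(lam * a))) := by
  rw [muex, withDensity_apply _ measurableSet_Ioi]
  have : ∀ t ∈ Ioi a, ENNReal.ofReal (fexp lam t)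
      = ENNReal.ofReal (lam * Real.exp (-(lam * t))) := by
    intro t ht
    have h0t : (0:ℝ) ≤ t := le_trans ha (le_of_lt ht)
    simp [fexp, Set.indicator_apply, Set.mem_Ici, h0t]
  rw [setLIntegral_congr_fun measurableSet_Ioi this]
  rw [← ofReal_integral_eq_lintegral_ofReal]
  · rw [MeasureTheory.integral_const_mul, integral_exp_rate lam a hlam]
    congr 1; field_simp
  · simpa [neg_mul] using (exp_neg_integrableOn_Ioi a hlam).const_mul lam
  · refine (ae_restrict_iff' measurableSet_Ioi).2 (Filter.Eventually.of_forall fun t _ => ?_)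
    positivity

lemma muex_ae_nonneg {lam : ℝ} : ∀ᵐ t ∂(muex lam), 0 ≤ t := by
  rw [ae_iff]
  have h : {t : ℝ | ¬ 0 ≤ t} = Iio 0 := by ext t; simp [Set.mem_Iio, not_le]
  rw [h, muex, withDensity_apply _ measurableSet_Iio]
  rw [setLIntegral_congr_fun measurableSet_Iio
    (fun ⦃t⦄ (ht : t < 0) => ?_)]
  · exact lintegral_zero
  · have h0t : ¬ (0:ℝ) ≤ t := not_le.mpr ht
    simp [fexp, Set.indicator_apply, Set.mem_Ici, h0t]

lemma measurable_fexp_ofReal (lam : ℝ) :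
    Measurable (fun t => ENNReal.ofReal (fexp lam t)) := by
  unfold fexp
  exact (((Real.measurable_exp.comp ((measurable_id.const_mul lam).neg)).const_mul
    lam).indicator measurableSet_Ici).ennreal_ofReal

lemma muex_lintegral {lam : ℝ} (hlam : 0 < lam) (g : ℝ → ℝ) (hg : Measurable g)
    (hgint : IntegrableOn (fun t => lam * Real.exp (-(lam * t)) * g t) (Ioi 0))
    (hgnn : ∀ t ∈ Ioi (0:ℝ), 0 ≤ g t) :
    ∫⁻ t, ENNReal.ofReal (g t) ∂(muex lam)
      = ENNReal.ofReal (∫ t in Ioi (0:ℝ), lam * Real.exp (-(lam * t)) * g t) := by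
  rw [muex, lintegral_withDensity_eq_lintegral_mul _ (measurable_fexp_ofReal lam)
    (hg.ennreal_ofReal)]
  have h1 : (fun t => ENNReal.ofReal (fexp lam t) * ENNReal.ofReal (g t))
      = fun t => (Ici (0:ℝ)).indicator
          (fun t => ENNReal.ofReal (lam * Real.exp (-(lam * t)) * g t)) t := by
    funext t
    by_cases ht : (0:ℝ) ≤ t
    · simp only [Set.indicator_apply, Set.mem_Ici, ht, if_true]
      have hfe : fexp lam t = lam * Real.exp (-(lam * t)) := by
        simp [fexp, Set.indicator_apply, Set.mem_Ici, ht]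
      rw [hfe, ← ENNReal.ofReal_mul (by positivity)]
    · simp only [Set.indicator_apply, Set.mem_Ici, ht, if_false]
      simp [fexp, Set.indicator_apply, Set.mem_Ici, ht]
  simp only [Pi.mul_apply]
  rw [h1, lintegral_indicator measurableSet_Ici,
    setLIntegral_congr (Ioi_ae_eq_Ici (a := (0:ℝ))).symm,
    ← ofReal_integral_eq_lintegral_ofReal hgint]
  exact (ae_restrict_iff' measurableSet_Ioi).2 (Filter.Eventually.of_forall
    fun t ht => by
      have := hgnn t ht
      have h0 : (0:ℝ) < t := ht
      positivity)

lemma inner_eval {lam x s : ℝ} (hlam : 0 < lam) (hx : 0 < x) (hs : 0 ≤ s) :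
    ∫⁻ t, ENNReal.ofReal (Real.exp (-(lam * (s * t / x)))) ∂(muex lam)
      = ENNReal.ofReal (x / (x + s)) := by
  have hxs : 0 < x + s := by linarith
  set c : ℝ := lam * (x + s) / x with hc
  have hc0 : 0 < c := by positivity
  have hfun : (fun t => lam * Real.exp (-(lam * t)) * Real.exp (-(lam * (s * t / x))))
      = fun t => lam * Real.exp (-(c * t)) := by
    funext t; rw [mul_assoc, ← Real.exp_add]; congr 2
    rw [hc]; field_simp; ring
  rw [muex_lintegral hlam _
    (by fun_prop : Measurable fun t : ℝ => Real.exp (-(lam * (s * t / x))))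
    (by rw [hfun]; simpa [neg_mul, IntegrableOn] using (exp_neg_integrableOn_Ioi 0 hc0).const_mul lam)
    (fun t _ => (Real.exp_pos _).le)]
  congr 1
  calc ∫ t in Ioi (0:ℝ), lam * Real.exp (-(lam * t)) * Real.exp (-(lam * (s * t / x)))
      = ∫ t in Ioi (0:ℝ), lam * Real.exp (-(c * t)) := by rw [hfun]
    _ = lam * (c⁻¹ * Real.exp (-(c * 0))) := by
        rw [MeasureTheory.integral_const_mul, integral_exp_rate c 0 hc0]
    _ = x / (x + s) := by rw [hc]; field_simp; ring; simp

lemma outer_eval {lam x : ℝ} (hlam : 0 < lam) (hx : 0 < x) :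
    ∫⁻ s, ENNReal.ofReal (x / (x + s)) ∂(muex lam)
      = ENNReal.ofReal (lam * x * Real.exp (lam * x) * expIntE1 (lam * x)) := by
  have hmeas : Measurable (fun s : ℝ => x / (x + s)) :=
    measurable_const.div (measurable_const.add measurable_id)
  have hint : IntegrableOn (fun s => lam * Real.exp (-(lam * s)) * (x / (x + s))) (Ioi 0) := by
    refine Integrable.mono'
      (by simpa [neg_mul] using (exp_neg_integrableOn_Ioi 0 hlam).const_mul lam)
      (((Real.measurable_exp.comp ((measurable_id.const_mul lam).neg)).const_mul
        lam).mul hmeas).aestronglyMeasurable ?_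
    refine (ae_restrict_iff' measurableSet_Ioi).2 (Filter.Eventually.of_forall fun s hs => ?_)
    have hs0 : (0:ℝ) < s := hs
    have hdiv1 : x / (x + s) ≤ 1 := by
      rw [div_le_one (by linarith)]; linarith
    rw [Real.norm_eq_abs, abs_of_nonneg (by positivity)]
    calc lam * Real.exp (-(lam * s)) * (x / (x + s))
        ≤ lam * Real.exp (-(lam * s)) * 1 := by
          apply mul_le_mul_of_nonneg_left hdiv1; positivity
      _ = lam * Real.exp (-(lam * s)) := by ring
  rw [muex_lintegral hlam _ hmeas hint (fun s hs => by
    have hs0 : (0:ℝ) < s := hs; positivity), realI hlam hx]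

lemma muex_Iio {lam : ℝ} : muex lam (Iio 0) = 0 := by
  have h := muex_ae_nonneg (lam := lam)
  rw [ae_iff] at h
  have : {t : ℝ | ¬ 0 ≤ t} = Iio 0 := by ext t; simp [Set.mem_Iio, not_le]
  rwa [this] at h

lemma prob_eval {Ω : Type*} [MeasurableSpace Ω] (P : Measure Ω) [IsProbabilityMeasure P]
    {lam : ℝ} (hlam : 0 < lam)
    (X₂ X₃ X₄ : Ω → ℝ) (hX₂ : Measurable X₂) (hX₃ : Measurable X₃) (hX₄ : Measurable X₄)
    (hlaw₂ : P.map X₂ = muex lam) (hlaw₃ : P.map X₃ = muex lam) (hlaw₄ : P.map X₄ = muex lam)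
    (hindep : iIndepFun ![X₂, X₃, X₄] P)
    {x : ℝ} (hx : 0 < x) :
    P {ω | X₃ ω * X₄ ω < x * X₂ ω}
      = ENNReal.ofReal (lam * x * Real.exp (lam * x) * expIntE1 (lam * x)) := by
  haveI : Fact (0 < lam) := ⟨hlam⟩
  set ν := muex lam with hν
  haveI : IsProbabilityMeasure ν := fact_prob lam
  have hm : ∀ i, Measurable (![X₂, X₃, X₄] i) := by
    intro i; fin_cases i <;> simpa using ‹_›
  have h34 : IndepFun X₃ X₄ P := by
    have := hindep.indepFun (show (1 : Fin 3) ≠ 2 by decide)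
    simpa using this
  have map34 : P.map (fun ω => (X₃ ω, X₄ ω)) = ν.prod ν := by
    rw [(indepFun_iff_map_prod_eq_prod_map_map hX₃.aemeasurable hX₄.aemeasurable).mp h34,
      hlaw₃, hlaw₄]
  have hpair : IndepFun (fun ω => (X₃ ω, X₄ ω)) X₂ P := by
    have := hindep.indepFun_prodMk hm 1 2 0 (by decide) (by decide)
    simpa using this
  have mapfull : P.map (fun ω => ((X₃ ω, X₄ ω), X₂ ω)) = (ν.prod ν).prod ν := by
    rw [(indepFun_iff_map_prod_eq_prod_map_map
      ((hX₃.prodMk hX₄).aemeasurable) hX₂.aemeasurable).mp hpair, map34, hlaw₂]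
  set S : Set ((ℝ × ℝ) × ℝ) := {p | p.1.1 * p.1.2 < x * p.2} with hSdef
  have hS : MeasurableSet S :=
    measurableSet_lt (measurable_fst.fst.mul measurable_fst.snd) (measurable_snd.const_mul x)
  have hφ : Measurable (fun ω => ((X₃ ω, X₄ ω), X₂ ω)) := (hX₃.prodMk hX₄).prodMk hX₂
  have hev : P {ω | X₃ ω * X₄ ω < x * X₂ ω} = ((ν.prod ν).prod ν) S := by
    rw [← mapfull, Measure.map_apply hφ hS]
    rfl
  rw [hev]
  have hpre : ∀ p : ℝ × ℝ, Prod.mk p ⁻¹' S = Ioi (p.1 * p.2 / x) := by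
    intro p; ext u
    simp only [Set.mem_preimage, Set.mem_Ioi, hSdef, Set.mem_setOf_eq, div_lt_iff₀ hx]
    rw [mul_comm x u]
  have hae1 : ∀ᵐ p : ℝ × ℝ ∂(ν.prod ν), 0 ≤ p.1 := by
    rw [ae_iff]
    have : {p : ℝ × ℝ | ¬ 0 ≤ p.1} = (Iio 0) ×ˢ (Set.univ : Set ℝ) := by
      ext p; simp [Set.mem_Iio, not_le]
    rw [this, Measure.prod_prod, muex_Iio, zero_mul]
  have hae2 : ∀ᵐ p : ℝ × ℝ ∂(ν.prod ν), 0 ≤ p.2 := by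
    rw [ae_iff]
    have : {p : ℝ × ℝ | ¬ 0 ≤ p.2} = (Set.univ : Set ℝ) ×ˢ (Iio 0) := by
      ext p; simp [Set.mem_Iio, not_le]
    rw [this, Measure.prod_prod, muex_Iio, mul_zero]
  calc ((ν.prod ν).prod ν) S = ∫⁻ p, ν (Prod.mk p ⁻¹' S) ∂(ν.prod ν) :=
        Measure.prod_apply hS
    _ = ∫⁻ p : ℝ × ℝ, ENNReal.ofReal (Real.exp (-(lam * (p.1 * p.2 / x)))) ∂(ν.prod ν) := by
        refine lintegral_congr_ae ?_
        filter_upwards [hae1, hae2] with p h1 h2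
        rw [hpre p, hν, muex_Ioi hlam (by positivity)]
    _ = ∫⁻ s, ∫⁻ t, ENNReal.ofReal (Real.exp (-(lam * (s * t / x)))) ∂ν ∂ν :=
        lintegral_prod _ (Measurable.ennreal_ofReal (by fun_prop)).aemeasurable
    _ = ∫⁻ s, ENNReal.ofReal (x / (x + s)) ∂ν := by
        refine lintegral_congr_ae ?_
        filter_upwards [muex_ae_nonneg] with s hs
        exact inner_eval hlam hx hs
    _ = ENNReal.ofReal (lam * x * Real.exp (lam * x) * expIntE1 (lam * x)) :=
        outer_eval hlam hx

lemma gamma_two_int : ∫ t in Ioi (0:ℝ), t * Real.exp (-t) = 1 := by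
  have hg := Real.Gamma_eq_integral (by norm_num : (0:ℝ) < 2)
  have hval : Real.Gamma 2 = 1 := by
    rw [show (2:ℝ) = 1 + 1 by norm_num, Real.Gamma_add_one one_ne_zero, Real.Gamma_one, mul_one]
  rw [hval] at hg
  rw [hg]
  refine setIntegral_congr_fun measurableSet_Ioi fun t ht => ?_
  rw [show (2:ℝ) - 1 = 1 by norm_num, Real.rpow_one, mul_comm]

lemma int_two_gamma : IntegrableOn (fun t => t * Real.exp (-t)) (Ioi (0:ℝ)) := by
  have h := Real.GammaIntegral_convergent (by norm_num : (0:ℝ) < 2)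
  refine h.congr_fun (fun t ht => ?_) measurableSet_Ioi
  beta_reduce
  rw [show (2:ℝ) - 1 = 1 by norm_num, Real.rpow_one, mul_comm]

lemma norm_one {lam : ℝ} (hlam : 0 < lam) :
    ∫ x in Ioi (0:ℝ), 2 * lam ^ 2 * x * expIntE1 (lam * x) = 1 := by
  have hmE : Measurable fun x => expIntE1 (lam * x) :=
    measurable_expIntE1.comp (measurable_id.const_mul lam)
  have hmain : (fun x : ℝ => 2 * lam ^ 2 * x * expIntE1 (lam * x))
      = fun x => (2 * lam ^ 2 * x) * expIntE1 (lam * x) := rfl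
  set T : Set (ℝ × ℝ) := {q | lam * q.1 < q.2} with hT
  have hTm : MeasurableSet T := measurableSet_lt (measurable_fst.const_mul lam) measurable_snd
  set g : ℝ × ℝ → ℝ≥0∞ := fun q => ENNReal.ofReal (Real.exp (-q.2) / q.2) with hg
  have hgm : Measurable g := Measurable.ennreal_ofReal (by fun_prop)
  set F : ℝ → ℝ → ℝ≥0∞ :=
    fun x t => ENNReal.ofReal (2 * lam ^ 2 * x) * T.indicator g (x, t) with hF
  have hFm : Measurable (Function.uncurry F) := by
    have : Function.uncurry F
        = fun p : ℝ × ℝ => ENNReal.ofReal (2 * lam ^ 2 * p.1) * T.indicator g p := rfl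
    rw [this]
    exact (Measurable.ennreal_ofReal (by fun_prop)).mul (hgm.indicator hTm)
  -- step 1 : pointwise identity for x > 0
  have hstep1 : ∀ x ∈ Ioi (0:ℝ),
      ENNReal.ofReal (2 * lam ^ 2 * x * expIntE1 (lam * x)) = ∫⁻ t in Ioi (0:ℝ), F x t := by
    intro x hx
    have hx0 : (0:ℝ) < x := hx
    have hlx : 0 < lam * x := by positivity
    rw [ENNReal.ofReal_mul (by positivity)]
    rw [expIntE1, ofReal_integral_eq_lintegral_ofReal (integrableOn_E1 hlx)
      ((ae_restrict_iff' measurableSet_Ioi).2 (Filter.Eventually.of_forall fun t ht => by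
        have h0 : (0:ℝ) < t := lt_trans hlx ht
        positivity))]
    have hind : ∫⁻ t in Ioi (lam * x), ENNReal.ofReal (Real.exp (-t) / t)
        = ∫⁻ t in Ioi (0:ℝ), T.indicator g (x, t) := by
      have h1 : ∀ t : ℝ, T.indicator g (x, t) = (Ioi (lam * x)).indicator
          (fun t => ENNReal.ofReal (Real.exp (-t) / t)) t := by
        intro t
        by_cases h : lam * x < t
        · rw [Set.indicator_of_mem (by exact h) , Set.indicator_of_mem (by exact h)]
        · rw [Set.indicator_of_notMem (by exact h), Set.indicator_of_notMem (by exact h)]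
      simp only [h1]
      rw [lintegral_indicator measurableSet_Ioi, Measure.restrict_restrict measurableSet_Ioi]
      have hinter : Ioi (lam * x) ∩ Ioi (0:ℝ) = Ioi (lam * x) := by
        rw [Set.inter_eq_left]
        exact fun t ht => lt_trans hlx ht
      rw [hinter]
    rw [hind, ← lintegral_const_mul' _ _ ENNReal.ofReal_ne_top]
  -- rewrite the lintegral
  have hL : ∫⁻ x in Ioi (0:ℝ), ENNReal.ofReal (2 * lam ^ 2 * x * expIntE1 (lam * x)) = 1 := by
    rw [setLIntegral_congr_fun measurableSet_Ioi hstep1]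
    rw [lintegral_lintegral_swap (hFm.aemeasurable)]
    have hstep3 : ∀ t ∈ Ioi (0:ℝ),
        ∫⁻ x in Ioi (0:ℝ), F x t = ENNReal.ofReal (t * Real.exp (-t)) := by
      intro t ht
      have ht0 : (0:ℝ) < t := ht
      have hc' : 0 < t / lam := by positivity
      have h1 : ∀ x : ℝ, F x t = (Iio (t / lam)).indicator
          (fun x => ENNReal.ofReal (2 * lam ^ 2 * x) * ENNReal.ofReal (Real.exp (-t) / t)) x := by
        intro x
        have hiff : lam * x < t ↔ x < t / lam := by
          rw [lt_div_iff₀ hlam, mul_comm]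
        by_cases h : lam * x < t
        · rw [Set.indicator_of_mem (show x ∈ Iio (t / lam) from hiff.1 h)]
          rw [hF]
          simp only []
          rw [Set.indicator_of_mem (show (x, t) ∈ T from h)]
        · rw [Set.indicator_of_notMem (show x ∉ Iio (t / lam) from fun hc => h (hiff.2 hc))]
          rw [hF]
          simp only []
          rw [Set.indicator_of_notMem (show (x, t) ∉ T from h)]
          rw [mul_zero]
      simp only [h1]
      rw [lintegral_indicator measurableSet_Iio, Measure.restrict_restrict measurableSet_Iio]
      have hio : Iio (t / lam) ∩ Ioi 0 = Ioo 0 (t / lam) := by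
        ext u; simp [Set.mem_Ioo, and_comm]
      rw [hio, lintegral_mul_const' _ _ ENNReal.ofReal_ne_top]
      have hA : ∫⁻ x in Ioo (0:ℝ) (t / lam), ENNReal.ofReal (2 * lam ^ 2 * x)
          = ENNReal.ofReal (t ^ 2) := by
        rw [← ofReal_integral_eq_lintegral_ofReal]
        · congr 1
          rw [← integral_Ioc_eq_integral_Ioo, ← intervalIntegral.integral_of_le hc'.le]
          rw [intervalIntegral.integral_const_mul, integral_id]
          field_simp
          ring
        · have : IntegrableOn (fun x : ℝ => 2 * lam ^ 2 * x) (Icc 0 (t / lam)) :=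
            (continuous_const.mul continuous_id).integrableOn_Icc
          exact this.mono_set Ioo_subset_Icc_self
        · refine (ae_restrict_iff' measurableSet_Ioo).2
            (Filter.Eventually.of_forall fun u hu => ?_)
          have : (0:ℝ) < u := hu.1
          positivity
      rw [hA, ← ENNReal.ofReal_mul (by positivity)]
      congr 1
      field_simp
    rw [setLIntegral_congr_fun measurableSet_Ioi hstep3]
    rw [← ofReal_integral_eq_lintegral_ofReal int_two_gamma
      ((ae_restrict_iff' measurableSet_Ioi).2 (Filter.Eventually.of_forall fun t ht => by
        have h0 : (0:ℝ) < t := ht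
        positivity))]
    rw [gamma_two_int, ENNReal.ofReal_one]
  rw [MeasureTheory.integral_eq_lintegral_of_nonneg_ae (f := fun x => 2 * lam ^ 2 * x * expIntE1 (lam * x))
    ((ae_restrict_iff' measurableSet_Ioi).2 (Filter.Eventually.of_forall fun x hx => by
      have hx0 : (0:ℝ) < x := hx
      have := expIntE1_nonneg (show (0:ℝ) ≤ lam * x by positivity)
      positivity))
    ((Measurable.mul (show Measurable fun x : ℝ => 2 * lam ^ 2 * x by fun_prop) hmE).aestronglyMeasurable)]
  rw [hL]
  simp


end AuxE1

/-- The factor density of the maximum of two products of two i.i.d. `Exp(λ)`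
variables: for `x > 0`, `2 f(x) P(X₃ X₄ < x X₂) = 2 λ² x E₁(λx)`, and this
function is a probability density on `(0,∞)`. -/
theorem exponential_factor_distribution
    {Ω : Type*} [MeasurableSpace Ω] (P : Measure Ω) [IsProbabilityMeasure P]
    (lam : ℝ) (hlam : 0 < lam)
    (X₂ X₃ X₄ : Ω → ℝ)
    (hX₂ : Measurable X₂) (hX₃ : Measurable X₃) (hX₄ : Measurable X₄)
    (f : ℝ → ℝ)
    (hf : f = Set.indicator (Set.Ici 0) (fun t => lam * Real.exp (-(lam * t))))
    (hlaw₂ : P.map X₂ = MeasureTheory.volume.withDensity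
      (fun t => ENNReal.ofReal (f t)))
    (hlaw₃ : P.map X₃ = MeasureTheory.volume.withDensity
      (fun t => ENNReal.ofReal (f t)))
    (hlaw₄ : P.map X₄ = MeasureTheory.volume.withDensity
      (fun t => ENNReal.ofReal (f t)))
    (hindep : iIndepFun ![X₂, X₃, X₄] P) :
    (∀ x : ℝ, 0 < x →
      2 * f x * (P {ω | X₃ ω * X₄ ω < x * X₂ ω}).toReal
        = 2 * lam ^ 2 * x * expIntE1 (lam * x))
    ∧ (∀ x ∈ Set.Ioi (0:ℝ), 0 ≤ 2 * lam ^ 2 * x * expIntE1 (lam * x))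
    ∧ ∫ x in Set.Ioi (0:ℝ), 2 * lam ^ 2 * x * expIntE1 (lam * x) = 1 := by
  have hff : f = fexp lam := by rw [hf]; rfl
  rw [hff] at hlaw₂ hlaw₃ hlaw₄
  have hlaw₂' : P.map X₂ = muex lam := hlaw₂
  have hlaw₃' : P.map X₃ = muex lam := hlaw₃
  have hlaw₄' : P.map X₄ = muex lam := hlaw₄
  refine ⟨?_, ?_, norm_one hlam⟩
  · intro x hx
    rw [prob_eval P hlam X₂ X₃ X₄ hX₂ hX₃ hX₄ hlaw₂' hlaw₃' hlaw₄' hindep hx]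
    have hE : 0 ≤ expIntE1 (lam * x) := expIntE1_nonneg (by positivity)
    rw [ENNReal.toReal_ofReal (by positivity)]
    have hfx : f x = lam * Real.exp (-(lam * x)) := by
      rw [hff]; simp [fexp, Set.indicator_apply, Set.mem_Ici, hx.le]
    rw [hfx]
    have hexp : Real.exp (-(lam * x)) * Real.exp (lam * x) = 1 := by
      rw [← Real.exp_add]; simp
    calc 2 * (lam * Real.exp (-(lam * x)))
          * (lam * x * Real.exp (lam * x) * expIntE1 (lam * x))
        = 2 * lam ^ 2 * x * expIntE1 (lam * x)
            * (Real.exp (-(lam * x)) * Real.exp (lam * x)) := by ring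
      _ = 2 * lam ^ 2 * x * expIntE1 (lam * x) := by rw [hexp, mul_one]
  · intro x hx
    have hx0 : (0:ℝ) < x := hx
    have hE : 0 ≤ expIntE1 (lam * x) := expIntE1_nonneg (by positivity)
    positivity
end

section
/- Let σ > 0 and let X_2, X_3, X_4 be i.i.d. Rayleigh random variables with density f(t) = (2t/σ) exp(−t^2/σ) for t ≥ 0. Then for all x > 0, the factor density of the maximum of two products, 2 f(x) P(X_3 · X_4 < x · X_2), equals (4 x^3 / σ^2) E_1(x^2/σ), where E_1(x) = ∫_x^∞ e^{−t}/t dt is the exponential integral. In particular, x ↦ (4x^3/σ^2) E_1(x^2/σ) is a probability density on (0, ∞). -/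
open MeasureTheory ProbabilityTheory

open Set Filter Real


lemma tail_hasDeriv (r : ℝ) (hr : 0 < r) (t : ℝ) :
    HasDerivAt (fun t => -Real.exp (-(r*t^2))/r) (2*t*Real.exp (-(r*t^2))) t := by
  have h : HasDerivAt (fun t : ℝ => -(r*t^2)) (-(r*(2*t))) t := by
    simpa using ((hasDerivAt_pow 2 t).const_mul r).fun_neg
  have := ((h.exp).fun_neg.div_const r)
  refine this.congr_deriv ?_
  field_simp

lemma tail_tendsto (r : ℝ) (hr : 0 < r) :
    Tendsto (fun t => -Real.exp (-(r*t^2))/r) atTop (nhds 0) := by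
  have h1 : Tendsto (fun t : ℝ => -(r*t^2)) atTop atBot := by
    apply tendsto_neg_atBot_iff.mpr
    exact Tendsto.const_mul_atTop hr (tendsto_pow_atTop (by norm_num))
  have h2 : Tendsto (fun t : ℝ => Real.exp (-(r*t^2))) atTop (nhds 0) :=
    Real.tendsto_exp_atBot.comp h1
  simpa using (h2.neg.div_const r)

lemma tail_nonneg (r : ℝ) (hr : 0 < r) {c : ℝ} (hc : 0 ≤ c) :
    ∀ t ∈ Ioi c, 0 ≤ 2*t*Real.exp (-(r*t^2)) := by
  intro t ht
  have : (0:ℝ) ≤ t := le_trans hc (le_of_lt ht)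
  positivity

lemma tail_integrableOn (r : ℝ) (hr : 0 < r) {c : ℝ} (hc : 0 ≤ c) :
    IntegrableOn (fun t => 2*t*Real.exp (-(r*t^2))) (Ioi c) := by
  apply integrableOn_Ioi_deriv_of_nonneg (g := fun t => -Real.exp (-(r*t^2))/r)
    (((tail_hasDeriv r hr c).continuousAt).continuousWithinAt)
    (fun t _ => tail_hasDeriv r hr t) (tail_nonneg r hr hc) (tail_tendsto r hr)

lemma tail_integral (r : ℝ) (hr : 0 < r) {c : ℝ} (hc : 0 ≤ c) :
    ∫ t in Ioi c, 2*t*Real.exp (-(r*t^2)) = Real.exp (-(r*c^2))/r := by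
  rw [integral_Ioi_of_hasDerivAt_of_nonneg (((tail_hasDeriv r hr c).continuousAt).continuousWithinAt)
    (fun t _ => tail_hasDeriv r hr t) (tail_nonneg r hr hc) (tail_tendsto r hr)]
  field_simp
  ring

lemma E1_integrand_nonneg {a : ℝ} (ha : 0 ≤ a) : ∀ t ∈ Ioi a, 0 ≤ Real.exp (-t) / t := by
  intro t ht
  have : (0:ℝ) ≤ t := le_trans ha (le_of_lt ht)
  positivity

lemma E1_nonneg {a : ℝ} (ha : 0 ≤ a) : 0 ≤ expIntE1 a :=
  setIntegral_nonneg measurableSet_Ioi (E1_integrand_nonneg ha)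

lemma E1_integrableOn {a : ℝ} (ha : 0 < a) :
    IntegrableOn (fun t => Real.exp (-t) / t) (Ioi a) := by
  apply Integrable.mono' (g := fun t => a⁻¹ * Real.exp (-(1:ℝ)*t))
    ((exp_neg_integrableOn_Ioi a one_pos).const_mul a⁻¹)
  · exact ((Real.measurable_exp.comp measurable_neg).div measurable_id).aestronglyMeasurable
  · filter_upwards [ae_restrict_mem measurableSet_Ioi] with t ht
    have h0 : 0 < t := lt_trans ha ht
    rw [Real.norm_eq_abs, abs_of_nonneg (by positivity)]
    rw [div_eq_mul_inv, neg_one_mul, mul_comm]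
    gcongr
    exact le_of_lt ht

section Rayleigh
variable {σ : ℝ} (hσ : 0 < σ)

noncomputable def rf (σ : ℝ) : ℝ → ℝ :=
  Set.indicator (Set.Ici 0) (fun t => (2 * t / σ) * Real.exp (-t ^ 2 / σ))

noncomputable def rμ (σ : ℝ) : Measure ℝ :=
  volume.withDensity (fun t => ENNReal.ofReal (rf σ t))

lemma rf_measurable : Measurable (rf σ) := by
  unfold rf
  exact Measurable.indicator (by fun_prop) measurableSet_Ici

lemma rf_nonneg (t : ℝ) (ht : 0 ≤ t) : rf σ t = (2 * t / σ) * Real.exp (-t ^ 2 / σ) := by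
  unfold rf; rw [Set.indicator_of_mem (by exact ht)]

include hσ

lemma rμ_Iio : rμ σ (Iio 0) = 0 := by
  unfold rμ
  rw [withDensity_apply _ measurableSet_Iio]
  rw [setLIntegral_congr_fun measurableSet_Iio
    (fun t ht => by
      unfold rf
      rw [Set.indicator_of_notMem (by simpa using ht), ENNReal.ofReal_zero])]
  simp

lemma rμ_Ioi {c : ℝ} (hc : 0 ≤ c) : rμ σ (Ioi c) = ENNReal.ofReal (Real.exp (-c^2/σ)) := by
  unfold rμ
  rw [withDensity_apply _ measurableSet_Ioi]
  have hre : ∀ t ∈ Ioi c, rf σ t = σ⁻¹ * (2 * t * Real.exp (-(σ⁻¹ * t^2))) := by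
    intro t ht
    rw [rf_nonneg _ (le_trans hc (le_of_lt ht))]
    have : -t^2/σ = -(σ⁻¹ * t^2) := by field_simp
    rw [this]; ring
  rw [setLIntegral_congr_fun measurableSet_Ioi
    (fun t ht => by rw [hre t ht])]
  rw [← ofReal_integral_eq_lintegral_ofReal
    ((tail_integrableOn σ⁻¹ (by positivity) hc).const_mul _)
    (Filter.eventually_of_mem (ae_restrict_mem measurableSet_Ioi)
      (fun t ht => by
        have : (0:ℝ) ≤ t := le_trans hc (le_of_lt ht)
        positivity))]
  rw [MeasureTheory.integral_const_mul, tail_integral σ⁻¹ (by positivity) hc]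
  congr 1
  have : -c^2/σ = -(σ⁻¹ * c^2) := by field_simp
  rw [this]; field_simp

lemma rμ_prob : IsProbabilityMeasure (rμ σ) := by
  constructor
  have hu : (univ : Set ℝ) = Iio 0 ∪ Ici 0 := by
    ext t; simp [lt_or_ge]
  have hIci : rμ σ (Ici 0) = rμ σ (Ioi 0) := by
    unfold rμ
    rw [withDensity_apply _ measurableSet_Ici, withDensity_apply _ measurableSet_Ioi,
      Measure.restrict_congr_set Ioi_ae_eq_Ici.symm]
  rw [hu, measure_union (by simp [disjoint_left]) measurableSet_Ici, rμ_Iio hσ, hIci,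
    rμ_Ioi hσ le_rfl]
  norm_num

lemma rμ_sfinite : SFinite (rμ σ) := by
  haveI := rμ_prob hσ; infer_instance

lemma rμ_ae_nonneg : ∀ᵐ t ∂(rμ σ), 0 ≤ t := by
  rw [ae_iff]
  exact measure_mono_null (fun t ht => by simpa using ht) (rμ_Iio hσ)

lemma rμ_lintegral (g : ℝ → ℝ) (hg : Measurable g) (hg0 : ∀ t, 0 ≤ g t)
    (hint : IntegrableOn (fun t => (2*t/σ*Real.exp (-t^2/σ)) * g t) (Ioi 0)) :
    ∫⁻ t, ENNReal.ofReal (g t) ∂(rμ σ)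
      = ENNReal.ofReal (∫ t in Ioi 0, (2*t/σ*Real.exp (-t^2/σ)) * g t) := by
  unfold rμ
  rw [lintegral_withDensity_eq_lintegral_mul (f := fun t => ENNReal.ofReal (rf σ t)) volume
    (by exact ENNReal.measurable_ofReal.comp (rf_measurable (σ := σ)))
    (g := fun t => ENNReal.ofReal (g t))
    (by exact ENNReal.measurable_ofReal.comp hg)]
  have hpt : ∀ t, (((fun t => ENNReal.ofReal (rf σ t)) * fun t => ENNReal.ofReal (g t)) t)
      = Set.indicator (Ici 0)
        (fun t => ENNReal.ofReal ((2*t/σ*Real.exp (-t^2/σ)) * g t)) t := by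
    intro t
    by_cases ht : (0:ℝ) ≤ t
    · rw [Set.indicator_of_mem (by exact ht), Pi.mul_apply, rf_nonneg t ht,
        ← ENNReal.ofReal_mul (by positivity)]
    · rw [Set.indicator_of_notMem (by exact ht), Pi.mul_apply]
      unfold rf
      rw [Set.indicator_of_notMem (by exact ht), ENNReal.ofReal_zero, zero_mul]
  rw [lintegral_congr hpt, lintegral_indicator measurableSet_Ici,
    Measure.restrict_congr_set Ioi_ae_eq_Ici.symm,
    ← ofReal_integral_eq_lintegral_ofReal hint
      (Filter.eventually_of_mem (ae_restrict_mem measurableSet_Ioi) (fun t ht => by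
        have h0 : (0:ℝ) < t := ht
        have := hg0 t
        positivity))]

lemma rμ_event {x s t : ℝ} (hx : 0 < x) (hs : 0 ≤ s) (ht : 0 ≤ t) :
    rμ σ {u | s*t < x*u} = ENNReal.ofReal (Real.exp (-(s*t/x)^2/σ)) := by
  have he : {u | s*t < x*u} = Ioi (s*t/x) := by
    ext u
    simp only [mem_setOf_eq, mem_Ioi]
    rw [div_lt_iff₀ hx, mul_comm u x]
  rw [he, rμ_Ioi hσ (by positivity)]

lemma inner_lint {x s : ℝ} (hx : 0 < x) (hs : 0 ≤ s) :
    ∫⁻ t, ENNReal.ofReal (Real.exp (-(s*t/x)^2/σ)) ∂(rμ σ)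
      = ENNReal.ofReal (x^2/(x^2+s^2)) := by
  set r : ℝ := σ⁻¹*(1+(s/x)^2) with hr
  have hrpos : 0 < r := by positivity
  have hcong : ∀ t : ℝ, (2*t/σ*Real.exp (-t^2/σ)) * Real.exp (-(s*t/x)^2/σ)
      = σ⁻¹ * (2*t*Real.exp (-(r*t^2))) := by
    intro t
    have h1 : -t^2/σ + -(s*t/x)^2/σ = -(r*t^2) := by
      rw [hr]
      field_simp
      ring
    calc 2*t/σ*Real.exp (-t^2/σ) * Real.exp (-(s*t/x)^2/σ)
        = σ⁻¹ * (2*t*(Real.exp (-t^2/σ) * Real.exp (-(s*t/x)^2/σ))) := by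
          field_simp
      _ = σ⁻¹ * (2*t*Real.exp (-(r*t^2))) := by rw [← Real.exp_add, h1]
  rw [rμ_lintegral hσ _ (by fun_prop) (fun t => Real.exp_nonneg _)
    (by
      rw [integrableOn_congr_fun (fun t _ => hcong t) measurableSet_Ioi]
      exact (tail_integrableOn r hrpos le_rfl).const_mul _)]
  congr 1
  rw [setIntegral_congr_fun measurableSet_Ioi (fun t _ => hcong t),
    MeasureTheory.integral_const_mul, tail_integral r hrpos le_rfl]
  have hx2 : x^2 ≠ 0 := by positivity
  field_simp [hr]
  simp [hr]
  field_simp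

lemma outer_integrableOn {x : ℝ} (hx : 0 < x) :
    IntegrableOn (fun s => (2*s/σ*Real.exp (-s^2/σ)) * (x^2/(x^2+s^2))) (Ioi 0) := by
  apply Integrable.mono' (g := fun s => σ⁻¹ * (2*s*Real.exp (-(σ⁻¹*s^2))))
    ((tail_integrableOn σ⁻¹ (by positivity) le_rfl).const_mul _)
  · apply Measurable.aestronglyMeasurable
    fun_prop
  · filter_upwards [ae_restrict_mem measurableSet_Ioi] with s hs
    have h0 : (0:ℝ) < s := hs
    have he : -s^2/σ = -(σ⁻¹*s^2) := by field_simp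
    rw [Real.norm_eq_abs, abs_of_nonneg (by positivity)]
    have h1 : x^2/(x^2+s^2) ≤ 1 := by
      rw [div_le_one (by positivity)]; nlinarith
    calc 2*s/σ*Real.exp (-s^2/σ) * (x^2/(x^2+s^2)) ≤ 2*s/σ*Real.exp (-s^2/σ) * 1 := by
          apply mul_le_mul_of_nonneg_left h1 (by positivity)
      _ = σ⁻¹ * (2*s*Real.exp (-s^2/σ)) := by ring
      _ = σ⁻¹ * (2*s*Real.exp (-(σ⁻¹*s^2))) := by rw [he]

lemma J_eq {x : ℝ} (hx : 0 < x) :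
    (((rμ σ).prod (rμ σ)).prod (rμ σ)) {p : (ℝ×ℝ)×ℝ | p.1.1*p.1.2 < x*p.2}
      = ENNReal.ofReal (∫ s in Ioi 0, (2*s/σ*Real.exp (-s^2/σ)) * (x^2/(x^2+s^2))) := by
  haveI := rμ_prob hσ
  have hS : MeasurableSet {p : (ℝ×ℝ)×ℝ | p.1.1*p.1.2 < x*p.2} :=
    measurableSet_lt (by fun_prop) (by fun_prop)
  rw [Measure.prod_apply hS]
  have hae : ∀ᵐ st ∂((rμ σ).prod (rμ σ)),
      rμ σ (Prod.mk st ⁻¹' {p : (ℝ×ℝ)×ℝ | p.1.1*p.1.2 < x*p.2})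
        = ENNReal.ofReal (Real.exp (-(st.1*st.2/x)^2/σ)) := by
    have h0 : ((rμ σ).prod (rμ σ)) ((Iio 0 ×ˢ univ) ∪ (univ ×ˢ Iio 0)) = 0 := by
      apply le_antisymm _ zero_le
      apply le_trans (measure_union_le _ _)
      rw [Measure.prod_prod, Measure.prod_prod, rμ_Iio hσ]
      simp
    have h1 : ∀ᵐ st ∂((rμ σ).prod (rμ σ)), 0 ≤ st.1 ∧ 0 ≤ st.2 := by
      rw [ae_iff]
      apply measure_mono_null _ h0
      intro st hst
      simp only [mem_setOf_eq, not_and_or, not_le] at hst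
      rcases hst with h | h
      · exact Or.inl ⟨h, trivial⟩
      · exact Or.inr ⟨trivial, h⟩
    filter_upwards [h1] with st hst
    have : (Prod.mk st ⁻¹' {p : (ℝ×ℝ)×ℝ | p.1.1*p.1.2 < x*p.2}) = {u | st.1*st.2 < x*u} := rfl
    rw [this, rμ_event hσ hx hst.1 hst.2]
  rw [lintegral_congr_ae hae,
    lintegral_prod _ (by fun_prop : Measurable fun st : ℝ × ℝ =>
      ENNReal.ofReal (Real.exp (-(st.1*st.2/x)^2/σ))).aemeasurable]
  have hae2 : ∀ᵐ s ∂(rμ σ), (∫⁻ t, ENNReal.ofReal (Real.exp (-(s*t/x)^2/σ)) ∂(rμ σ))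
      = ENNReal.ofReal (x^2/(x^2+s^2)) := by
    filter_upwards [rμ_ae_nonneg hσ] with s hs
    exact inner_lint hσ hx hs
  rw [lintegral_congr_ae hae2]
  exact rμ_lintegral hσ _ (by fun_prop) (fun s => by positivity) (outer_integrableOn hσ hx)

lemma I_eq1 {x : ℝ} (hx : 0 < x) :
    ∫ u in Ioi (0:ℝ), x^2 * Real.exp (-u) / (σ*u + x^2)
      = ∫ s in Ioi (0:ℝ), (2*s/σ*Real.exp (-s^2/σ)) * (x^2/(x^2+s^2)) := by
  have himg : (fun s : ℝ => s^2/σ) '' Ioi 0 = Ioi 0 := by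
    ext u
    simp only [mem_image, mem_Ioi]
    constructor
    · rintro ⟨s, hs, rfl⟩; positivity
    · intro hu
      refine ⟨Real.sqrt (σ*u), Real.sqrt_pos.mpr (by positivity), ?_⟩
      rw [Real.sq_sqrt (by positivity)]
      field_simp
  have hderiv : ∀ s ∈ Ioi (0:ℝ), HasDerivWithinAt (fun s : ℝ => s^2/σ) (2*s/σ) (Ioi 0) s := by
    intro s _
    simpa using ((hasDerivAt_pow 2 s).div_const σ).hasDerivWithinAt
  have hinj : InjOn (fun s : ℝ => s^2/σ) (Ioi 0) := by
    intro a ha b hb h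
    simp only [mem_Ioi] at ha hb
    field_simp at h
    nlinarith [sq_nonneg (a-b), sq_nonneg (a+b)]
  have := MeasureTheory.integral_image_eq_integral_abs_deriv_smul measurableSet_Ioi hderiv hinj
    (fun u => x^2 * Real.exp (-u) / (σ*u + x^2))
  rw [himg] at this
  rw [this]
  apply setIntegral_congr_fun measurableSet_Ioi
  intro s hs
  have h0 : (0:ℝ) < s := hs
  have : σ * (s^2/σ) = s^2 := by field_simp
  simp only [smul_eq_mul]
  rw [abs_of_nonneg (by positivity), this]
  field_simp
  ring

lemma E1_shift (a : ℝ) : expIntE1 a = ∫ u in Ioi (0:ℝ), Real.exp (-(u+a))/(u+a) := by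
  unfold expIntE1
  have himg : (fun u : ℝ => u + a) '' Ioi 0 = Ioi a := by
    ext t
    simp only [mem_image, mem_Ioi]
    constructor
    · rintro ⟨u, hu, rfl⟩; linarith
    · intro ht; exact ⟨t - a, by linarith, by ring⟩
  have hderiv : ∀ u ∈ Ioi (0:ℝ), HasDerivWithinAt (fun u : ℝ => u + a) 1 (Ioi 0) u :=
    fun u _ => ((hasDerivAt_id u).add_const a).hasDerivWithinAt
  have hinj : InjOn (fun u : ℝ => u + a) (Ioi 0) := fun u _ v _ h => by
    simpa using h
  have := MeasureTheory.integral_image_eq_integral_abs_deriv_smul measurableSet_Ioi hderiv hinj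
    (fun t => Real.exp (-t)/t)
  rw [himg] at this
  rw [this]
  simp

lemma I_eq2 {x : ℝ} (hx : 0 < x) :
    ∫ u in Ioi (0:ℝ), x^2 * Real.exp (-u) / (σ*u + x^2)
      = (x^2/σ) * Real.exp (x^2/σ) * expIntE1 (x^2/σ) := by
  rw [E1_shift hσ (x^2/σ), mul_assoc, ← MeasureTheory.integral_const_mul,
    ← MeasureTheory.integral_const_mul]
  apply setIntegral_congr_fun measurableSet_Ioi
  intro u hu
  have h0 : (0:ℝ) < u := hu
  have hexp : Real.exp (x^2/σ) * Real.exp (-(u + x^2/σ)) = Real.exp (-u) := by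
    rw [← Real.exp_add]; ring_nf
  have hne : u + x^2/σ ≠ 0 := by positivity
  show x^2 * Real.exp (-u) / (σ*u + x^2)
      = x^2/σ * (Real.exp (x^2/σ) * (Real.exp (-(u + x^2/σ))/(u + x^2/σ)))
  have h1 : x^2/σ * (Real.exp (x^2/σ) * (Real.exp (-(u + x^2/σ))/(u + x^2/σ)))
      = x^2 * (Real.exp (x^2/σ) * Real.exp (-(u + x^2/σ))) / (σ*u+x^2) := by
    field_simp
  rw [h1, hexp]

end Rayleigh

lemma E1_meas : Measurable (fun t : ℝ => Real.exp (-t)/t) :=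
  (Real.measurable_exp.comp measurable_neg).div measurable_id

lemma E1_continuousAt {y : ℝ} (hy : 0 < y) : ContinuousAt expIntE1 y := by
  have hc : 0 < y/2 := by linarith
  have hcy : y/2 < y := by linarith
  have hsplit : ∀ z, y/2 < z →
      expIntE1 z = expIntE1 (y/2) - ∫ t in (y/2)..z, Real.exp (-t)/t := by
    intro z hz
    have hzc : y/2 ≤ z := le_of_lt hz
    have h1 : expIntE1 (y/2) = (∫ t in Ioc (y/2) z, Real.exp (-t)/t) + expIntE1 z := by
      unfold expIntE1
      rw [← setIntegral_union Ioc_disjoint_Ioi_same measurableSet_Ioi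
        ((E1_integrableOn hc).mono_set Ioc_subset_Ioi_self)
        (E1_integrableOn (lt_of_lt_of_le hc hzc)),
        Ioc_union_Ioi_eq_Ioi hzc]
    rw [intervalIntegral.integral_of_le hzc]
    linarith
  have hd : HasDerivAt (fun z => ∫ t in (y/2)..z, Real.exp (-t)/t) (Real.exp (-y)/y) y := by
    apply intervalIntegral.integral_hasDerivAt_right
    · rw [intervalIntegrable_iff_integrableOn_Ioc_of_le (le_of_lt hcy)]
      exact (E1_integrableOn hc).mono_set Ioc_subset_Ioi_self
    · exact E1_meas.stronglyMeasurable.stronglyMeasurableAtFilter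
    · exact ((Real.continuous_exp.comp continuous_neg).continuousAt).div
        continuousAt_id (ne_of_gt hy)
  exact (continuousAt_const.sub hd.continuousAt).congr
    (Filter.eventually_of_mem (Ioi_mem_nhds hcy) (fun z hz => (hsplit z hz).symm))

section Part3
variable {σ : ℝ} (hσ : 0 < σ)

noncomputable def F3 (σ : ℝ) : ℝ × ℝ → ENNReal := fun p =>
  Set.indicator {q : ℝ × ℝ | q.1^2 < σ*q.2}
    (fun q => ENNReal.ofReal (4*q.1^3/σ^2 * (Real.exp (-q.2)/q.2))) p

lemma F3_meas : Measurable (F3 σ) :=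
  Measurable.indicator (by fun_prop) (measurableSet_lt (by fun_prop) (by fun_prop))

include hσ

lemma F3_inner_t {x : ℝ} (hx : 0 < x) :
    ∫⁻ t in Ioi (0:ℝ), F3 σ (x, t)
      = ENNReal.ofReal ((4*x^3/σ^2) * expIntE1 (x^2/σ)) := by
  have ha : 0 < x^2/σ := by positivity
  have hpt : ∀ t : ℝ, F3 σ (x, t)
      = Set.indicator (Ioi (x^2/σ))
        (fun t => ENNReal.ofReal (4*x^3/σ^2 * (Real.exp (-t)/t))) t := by
    intro t
    unfold F3
    have hiff : ((x, t) ∈ {q : ℝ × ℝ | q.1^2 < σ*q.2}) ↔ t ∈ Ioi (x^2/σ) := by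
      simp only [mem_setOf_eq, mem_Ioi]
      rw [div_lt_iff₀ hσ, mul_comm t σ]
    by_cases ht : (x, t) ∈ {q : ℝ × ℝ | q.1^2 < σ*q.2}
    · rw [Set.indicator_of_mem ht, Set.indicator_of_mem (hiff.mp ht)]
    · rw [Set.indicator_of_notMem ht, Set.indicator_of_notMem (fun h => ht (hiff.mpr h))]
  rw [lintegral_congr hpt, lintegral_indicator measurableSet_Ioi,
    Measure.restrict_restrict measurableSet_Ioi,
    inter_eq_left.mpr (Ioi_subset_Ioi ha.le),
    ← ofReal_integral_eq_lintegral_ofReal ((E1_integrableOn ha).const_mul (4*x^3/σ^2))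
      (Filter.eventually_of_mem (ae_restrict_mem measurableSet_Ioi) (fun t ht => by
        have h0 : (0:ℝ) < t := lt_trans ha ht
        positivity)),
    MeasureTheory.integral_const_mul]
  rfl

lemma F3_inner_x {t : ℝ} (ht : 0 < t) :
    ∫⁻ x in Ioi (0:ℝ), F3 σ (x, t) = ENNReal.ofReal (t * Real.exp (-t)) := by
  set b := Real.sqrt (σ*t) with hbdef
  have hb : 0 < b := Real.sqrt_pos.mpr (by positivity)
  have hb2 : b^2 = σ*t := Real.sq_sqrt (by positivity)
  set K := Real.exp (-t)/t with hK
  have hK0 : 0 ≤ K := by rw [hK]; positivity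
  have hpt : ∀ x ∈ Ioi (0:ℝ), F3 σ (x, t)
      = Set.indicator (Iio b) (fun x => ENNReal.ofReal (4*x^3/σ^2 * K)) x := by
    intro x hx
    have hx0 : (0:ℝ) < x := hx
    unfold F3
    have hiff : ((x, t) ∈ {q : ℝ × ℝ | q.1^2 < σ*q.2}) ↔ x ∈ Iio b := by
      simp only [mem_setOf_eq, mem_Iio, hbdef]
      rw [Real.lt_sqrt hx0.le]
    by_cases hm : (x, t) ∈ {q : ℝ × ℝ | q.1^2 < σ*q.2}
    · rw [Set.indicator_of_mem hm, Set.indicator_of_mem (hiff.mp hm)]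
    · rw [Set.indicator_of_notMem hm, Set.indicator_of_notMem (fun h => hm (hiff.mpr h))]
  rw [setLIntegral_congr_fun measurableSet_Ioi hpt,
    lintegral_indicator measurableSet_Iio,
    Measure.restrict_restrict measurableSet_Iio]
  have hint : Iio b ∩ Ioi 0 = Ioo 0 b := by
    ext z; simp only [mem_inter_iff, mem_Iio, mem_Ioi, mem_Ioo]; tauto
  rw [hint]
  have hInt : IntegrableOn (fun x : ℝ => 4*x^3/σ^2 * K) (Ioo 0 b) := by
    apply IntegrableOn.mono_set _ Ioo_subset_Ioc_self
    rw [← intervalIntegrable_iff_integrableOn_Ioc_of_le hb.le]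
    exact (Continuous.intervalIntegrable (by fun_prop) _ _)
  rw [← ofReal_integral_eq_lintegral_ofReal hInt
    (Filter.eventually_of_mem (ae_restrict_mem measurableSet_Ioo) (fun z hz => by
      have h0 : (0:ℝ) < z := hz.1
      positivity))]
  congr 1
  rw [← integral_Ioc_eq_integral_Ioo, ← intervalIntegral.integral_of_le hb.le]
  have : ∀ x : ℝ, 4*x^3/σ^2 * K = (4*K/σ^2) * x^3 := fun x => by ring
  rw [intervalIntegral.integral_congr (fun x _ => this x)]
  rw [intervalIntegral.integral_const_mul, integral_pow]
  have hb4 : b^4 = (σ*t)^2 := by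
    rw [show b^4 = (b^2)^2 by ring, hb2]
  rw [hb4]
  rw [hK]
  field_simp
  ring

omit hσ in
lemma gamma2_deriv (t : ℝ) :
    HasDerivAt (fun t : ℝ => -((t+1)*Real.exp (-t))) (t*Real.exp (-t)) t := by
  have h1 : HasDerivAt (fun t : ℝ => t+1) 1 t := (hasDerivAt_id t).add_const 1
  have h2 : HasDerivAt (fun t : ℝ => Real.exp (-t)) (Real.exp (-t) * (-1)) t :=
    ((hasDerivAt_id t).neg).exp
  have := (h1.fun_mul h2).fun_neg
  refine this.congr_deriv ?_
  ring

omit hσ in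
lemma gamma2_tendsto :
    Filter.Tendsto (fun t : ℝ => -((t+1)*Real.exp (-t))) Filter.atTop (nhds 0) := by
  have h1 : Filter.Tendsto (fun t : ℝ => t^1*Real.exp (-t) + Real.exp (-t))
      Filter.atTop (nhds (0+0)) :=
    (Real.tendsto_pow_mul_exp_neg_atTop_nhds_zero 1).add Real.tendsto_exp_neg_atTop_nhds_zero
  have h2 : (fun t : ℝ => -((t+1)*Real.exp (-t)))
      = fun t => -(t^1*Real.exp (-t) + Real.exp (-t)) := by
    funext t; ring
  rw [h2]
  simpa using h1.neg

omit hσ in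
lemma gamma2_nonneg : ∀ t ∈ Ioi (0:ℝ), 0 ≤ t*Real.exp (-t) := by
  intro t ht
  have : (0:ℝ) < t := ht
  positivity

omit hσ in
lemma gamma2_integrable : IntegrableOn (fun t : ℝ => t*Real.exp (-t)) (Ioi 0) :=
  integrableOn_Ioi_deriv_of_nonneg ((gamma2_deriv 0).continuousAt.continuousWithinAt)
    (fun t _ => gamma2_deriv t) gamma2_nonneg gamma2_tendsto

omit hσ in
lemma gamma2_value : ∫ t in Ioi (0:ℝ), t*Real.exp (-t) = 1 := by
  rw [integral_Ioi_of_hasDerivAt_of_nonneg ((gamma2_deriv 0).continuousAt.continuousWithinAt)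
    (fun t _ => gamma2_deriv t) gamma2_nonneg gamma2_tendsto]
  norm_num

lemma part3_s10 : ∫ x in Ioi (0:ℝ), (4*x^3/σ^2) * expIntE1 (x^2/σ) = 1 := by
  have hnn : ∀ᵐ x ∂(volume.restrict (Ioi (0:ℝ))),
      0 ≤ (4*x^3/σ^2) * expIntE1 (x^2/σ) := by
    filter_upwards [ae_restrict_mem measurableSet_Ioi] with x hx
    have hx0 : (0:ℝ) < x := hx
    have hE := E1_nonneg (a := x^2/σ) (by positivity)
    positivity
  have hsm : AEStronglyMeasurable (fun x => (4*x^3/σ^2) * expIntE1 (x^2/σ))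
      (volume.restrict (Ioi (0:ℝ))) := by
    apply ContinuousOn.aestronglyMeasurable _ measurableSet_Ioi
    intro x hx
    have hx0 : (0:ℝ) < x := hx
    exact (ContinuousAt.mul (by fun_prop)
      ((E1_continuousAt (by positivity)).comp (by fun_prop))).continuousWithinAt
  rw [integral_eq_lintegral_of_nonneg_ae hnn hsm]
  have key : ∫⁻ x in Ioi (0:ℝ), ENNReal.ofReal ((4*x^3/σ^2) * expIntE1 (x^2/σ)) = 1 := by
    rw [setLIntegral_congr_fun measurableSet_Ioi
      (fun x hx => (F3_inner_t hσ hx).symm)]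
    rw [lintegral_lintegral_swap (f := fun x t => F3 σ (x,t))
      (by exact (F3_meas (σ := σ)).aemeasurable)]
    rw [setLIntegral_congr_fun measurableSet_Ioi
      (fun t ht => F3_inner_x hσ ht)]
    rw [← ofReal_integral_eq_lintegral_ofReal gamma2_integrable
      (Filter.eventually_of_mem (ae_restrict_mem measurableSet_Ioi)
        (fun t ht => gamma2_nonneg t ht)),
      gamma2_value]
    simp
  rw [key]
  simp

end Part3

/-- The factor density of the maximum of two products of two i.i.d.
Rayleigh(σ) variables: for `x > 0`,
`2 f(x) P(X₃ X₄ < x X₂) = (4x³/σ²) E₁(x²/σ)`, and this function is a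
probability density on `(0,∞)`. -/
theorem rayleigh_factor_distribution
    {Ω : Type*} [MeasurableSpace Ω] (P : Measure Ω) [IsProbabilityMeasure P]
    (σ : ℝ) (hσ : 0 < σ)
    (X₂ X₃ X₄ : Ω → ℝ)
    (hX₂ : Measurable X₂) (hX₃ : Measurable X₃) (hX₄ : Measurable X₄)
    (f : ℝ → ℝ)
    (hf : f = Set.indicator (Set.Ici 0)
      (fun t => (2 * t / σ) * Real.exp (-t ^ 2 / σ)))
    (hlaw₂ : P.map X₂ = MeasureTheory.volume.withDensity
      (fun t => ENNReal.ofReal (f t)))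
    (hlaw₃ : P.map X₃ = MeasureTheory.volume.withDensity
      (fun t => ENNReal.ofReal (f t)))
    (hlaw₄ : P.map X₄ = MeasureTheory.volume.withDensity
      (fun t => ENNReal.ofReal (f t)))
    (hindep : iIndepFun ![X₂, X₃, X₄] P) :
    (∀ x : ℝ, 0 < x →
      2 * f x * (P {ω | X₃ ω * X₄ ω < x * X₂ ω}).toReal
        = (4 * x ^ 3 / σ ^ 2) * expIntE1 (x ^ 2 / σ))
    ∧ (∀ x ∈ Set.Ioi (0:ℝ), 0 ≤ (4 * x ^ 3 / σ ^ 2) * expIntE1 (x ^ 2 / σ))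
    ∧ ∫ x in Set.Ioi (0:ℝ), (4 * x ^ 3 / σ ^ 2) * expIntE1 (x ^ 2 / σ) = 1 := by
  have hfr : f = rf σ := hf
  have hl₂ : P.map X₂ = rμ σ := by rw [hlaw₂, hfr]; rfl
  have hl₃ : P.map X₃ = rμ σ := by rw [hlaw₃, hfr]; rfl
  have hl₄ : P.map X₄ = rμ σ := by rw [hlaw₄, hfr]; rfl
  haveI := rμ_prob hσ
  have hmeasvec : ∀ i, Measurable (![X₂, X₃, X₄] i) := by
    intro i; fin_cases i <;> simpa
  -- joint law of ((X₃, X₄), X₂)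
  have h34indep : IndepFun X₃ X₄ P := by
    have := hindep.indepFun (show (1 : Fin 3) ≠ 2 by decide)
    simpa using this
  have h34 : P.map (fun ω => (X₃ ω, X₄ ω)) = (rμ σ).prod (rμ σ) := by
    rw [(indepFun_iff_map_prod_eq_prod_map_map hX₃.aemeasurable hX₄.aemeasurable).mp h34indep,
      hl₃, hl₄]
  have hpairindep : IndepFun (fun ω => (X₃ ω, X₄ ω)) X₂ P := by
    have := hindep.indepFun_prodMk hmeasvec 1 2 0 (by decide) (by decide)
    simpa using this
  have hmap : P.map (fun ω => ((X₃ ω, X₄ ω), X₂ ω)) = ((rμ σ).prod (rμ σ)).prod (rμ σ) := by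
    rw [(indepFun_iff_map_prod_eq_prod_map_map (hX₃.prodMk hX₄).aemeasurable
      hX₂.aemeasurable).mp hpairindep, h34, hl₂]
  refine ⟨?_, ?_, part3_s10 hσ⟩
  · intro x hx
    have hS : MeasurableSet {p : (ℝ×ℝ)×ℝ | p.1.1*p.1.2 < x*p.2} :=
      measurableSet_lt (by fun_prop) (by fun_prop)
    have hPev : P {ω | X₃ ω * X₄ ω < x * X₂ ω}
        = (((rμ σ).prod (rμ σ)).prod (rμ σ)) {p : (ℝ×ℝ)×ℝ | p.1.1*p.1.2 < x*p.2} := by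
      rw [← hmap, Measure.map_apply ((hX₃.prodMk hX₄).prodMk hX₂) hS]
      rfl
    rw [hPev, J_eq hσ hx]
    have hI0 : 0 ≤ ∫ s in Ioi (0:ℝ), (2*s/σ*Real.exp (-s^2/σ)) * (x^2/(x^2+s^2)) := by
      apply setIntegral_nonneg measurableSet_Ioi
      intro s hs
      have h0 : (0:ℝ) < s := hs
      positivity
    rw [ENNReal.toReal_ofReal hI0, ← I_eq1 hσ hx, I_eq2 hσ hx]
    have hfx : f x = (2 * x / σ) * Real.exp (-x ^ 2 / σ) := by
      rw [hf, Set.indicator_of_mem (by exact hx.le)]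
    rw [hfx]
    have hexp : Real.exp (-x^2/σ) * Real.exp (x^2/σ) = 1 := by
      rw [← Real.exp_add]; ring_nf; exact Real.exp_zero
    linear_combination (4*x^3/σ^2 * expIntE1 (x^2/σ)) * hexp
  · intro x hx
    have hx0 : (0:ℝ) < x := hx
    have hE := E1_nonneg (a := x^2/σ) (by positivity)
    positivity
end

section
/- For every integer n ≥ 1, ∫_0^∞ x · [ n e^{−x}(x − H_{n−1}) + Σ_{j=2}^{n} (−1)^j C(n,j) (j/(j−1)) e^{−jx} ] dx = 1 + 1/n + H_{n−1}, where H_j = Σ_{i=1}^j 1/i (H_0 = 0). Moreover, for n ≥ 2 this expected value E_max(n) = 1 + 1/n + H_{n−1} satisfies 1 + 1/n + γ + log(n−1) < E_max(n) < 1 + 1/n + γ + log n, where γ is the Euler–Mascheroni constant and log is the natural logarithm; in particular E_max(n) grows logarithmically in n. -/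
open MeasureTheory Finset Real

/-- The `j`-th harmonic number `H_j = ∑_{i=1}^j 1/i` (with `H_0 = 0`). -/
noncomputable def harm (j : ℕ) : ℝ :=
  ∑ i ∈ Finset.range j, (1 : ℝ) / (i + 1)

lemma harm_eq_harmonic (n : ℕ) : harm n = (harmonic n : ℝ) := by
  rw [harm, harmonic]
  push_cast
  simp [one_div]

lemma harm_succ (n : ℕ) : harm (n+1) = harm n + 1/((n:ℝ)+1) := by
  rw [harm, Finset.sum_range_succ, harm]

lemma alt_choose_sum (n : ℕ) (hn : n ≠ 0) :
    ∑ j ∈ range (n+1), (-1:ℝ)^j * (n.choose j : ℝ) = 0 := by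
  have h := Int.alternating_sum_range_choose_of_ne hn
  have := congrArg (fun z : ℤ => (z : ℝ)) h
  push_cast at this
  simpa using this

lemma altB (n : ℕ) :
    ∑ j ∈ range (n+1), (-1:ℝ)^j * (n.choose j : ℝ) / ((j:ℝ)+1) = 1/((n:ℝ)+1) := by
  have key : ∀ j : ℕ, (-1:ℝ)^j * (n.choose j : ℝ) / ((j:ℝ)+1)
      = ((-1:ℝ)^j * (((n+1).choose (j+1) : ℕ) : ℝ)) / ((n:ℝ)+1) := by
    intro j
    have h := Nat.add_one_mul_choose_eq n j
    have h' : ((n:ℝ)+1) * (n.choose j : ℝ) = (((n+1).choose (j+1) : ℕ) : ℝ) * ((j:ℝ)+1) := by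
      exact_mod_cast h
    rw [div_eq_div_iff (by positivity) (by positivity)]
    linear_combination ((-1:ℝ)^j) * h'
  simp_rw [key]
  rw [← Finset.sum_div]
  have h2 : ∑ j ∈ range (n+1), (-1:ℝ)^j * (((n+1).choose (j+1) : ℕ) : ℝ) = 1 := by
    have h := alt_choose_sum (n+1) (Nat.succ_ne_zero n)
    rw [Finset.sum_range_succ'] at h
    simp only [pow_succ, pow_zero, Nat.choose_zero_right, Nat.cast_one, one_mul] at h
    have h3 : ∑ j ∈ range (n+1), (-1:ℝ)^j * (-1) * (((n+1).choose (j+1) : ℕ) : ℝ)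
        = -∑ j ∈ range (n+1), (-1:ℝ)^j * (((n+1).choose (j+1) : ℕ) : ℝ) := by
      rw [← Finset.sum_neg_distrib]
      exact Finset.sum_congr rfl fun j _ => by ring
    rw [h3] at h
    linarith
  rw [h2]

lemma altA (n : ℕ) :
    ∑ i ∈ range (n+1), (-1:ℝ)^i * (n.choose (i+1) : ℝ) / ((i:ℝ)+1) = harm n := by
  induction n with
  | zero => simp [harm]
  | succ n ih =>
    have key : ∀ i : ℕ, (-1:ℝ)^i * ((n+1).choose (i+1) : ℝ) / ((i:ℝ)+1)
        = (-1:ℝ)^i * (n.choose i : ℝ) / ((i:ℝ)+1)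
          + (-1:ℝ)^i * (n.choose (i+1) : ℝ) / ((i:ℝ)+1) := by
      intro i
      rw [Nat.choose_succ_succ]
      push_cast
      ring
    simp_rw [key, Finset.sum_add_distrib]
    rw [Finset.sum_range_succ _ (n+1), Finset.sum_range_succ _ (n+1)]
    rw [Nat.choose_eq_zero_of_lt (by omega : n < n+1+1),
      Nat.choose_eq_zero_of_lt (Nat.lt_succ_self n)]
    rw [altB, ih, harm_succ]
    push_cast
    ring

lemma alt2 (n : ℕ) :
    ∑ i ∈ range (n+2), (-1:ℝ)^i * (((n+1).choose (i+2) : ℕ) : ℝ) = (n:ℝ) := by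
  have h := alt_choose_sum (n+1) (Nat.succ_ne_zero n)
  rw [Finset.sum_range_succ', Finset.sum_range_succ'] at h
  simp only [pow_succ, pow_zero, Nat.choose_zero_right, Nat.choose_one_right,
    Nat.cast_one, one_mul] at h
  rw [Finset.sum_range_succ, Finset.sum_range_succ]
  rw [Nat.choose_eq_zero_of_lt (by omega : n+1 < n+2), Nat.choose_eq_zero_of_lt (by omega : n+1 < n+1+2)]
  have h3 : ∑ i ∈ range n, (-1:ℝ)^i * (-1) * (-1) * (((n+1).choose (i+1+1) : ℕ) : ℝ)
      = ∑ i ∈ range n, (-1:ℝ)^i * (((n+1).choose (i+2) : ℕ) : ℝ) :=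
    Finset.sum_congr rfl fun i _ => by ring_nf
  rw [h3, Nat.choose_one_right] at h
  push_cast at h ⊢
  linarith

lemma Ssum (m : ℕ) :
    ∑ i ∈ range (m+2), (-1:ℝ)^i * ((m+1).choose (i+2) : ℝ) / (((i:ℝ)+2)*((i:ℝ)+1))
      = ((m:ℝ)+2) * harm m - 2*((m:ℝ)+1) + 1 + 1/((m:ℝ)+1) := by
  induction m with
  | zero =>
    rw [Finset.sum_range_succ, Finset.sum_range_succ]
    norm_num [harm, Nat.choose_eq_zero_of_lt]
  | succ m ih =>
    have key : ∀ i : ℕ, (-1:ℝ)^i * ((m+2).choose (i+2) : ℝ) / (((i:ℝ)+2)*((i:ℝ)+1))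
        = ((-1:ℝ)^i * ((m+1).choose (i+1) : ℝ) / ((i:ℝ)+1)
            - ((-1:ℝ)^i * (((m+2).choose (i+2) : ℕ) : ℝ)) / ((m:ℝ)+2))
          + (-1:ℝ)^i * ((m+1).choose (i+2) : ℝ) / (((i:ℝ)+2)*((i:ℝ)+1)) := by
      intro i
      have h' : ((m:ℝ)+2) * ((m+1).choose (i+1) : ℝ)
          = (((m+2).choose (i+2) : ℕ) : ℝ) * ((i:ℝ)+2) := by
        exact_mod_cast Nat.add_one_mul_choose_eq (m+1) (i+1)
      have hp' : (((m+2).choose (i+2) : ℕ) : ℝ)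
          = ((m+1).choose (i+1) : ℝ) + ((m+1).choose (i+2) : ℝ) := by
        exact_mod_cast Nat.choose_succ_succ (m+1) (i+1)
      have h1 : ((i:ℝ)+1) ≠ 0 := by positivity
      have h2 : ((i:ℝ)+2) ≠ 0 := by positivity
      have h3 : ((m:ℝ)+2) ≠ 0 := by positivity
      have key2 : ((-1:ℝ)^i * (((m+2).choose (i+2) : ℕ) : ℝ)) / ((m:ℝ)+2)
          = ((-1:ℝ)^i * ((m+1).choose (i+1) : ℝ)) / ((i:ℝ)+2) := by
        rw [div_eq_div_iff h3 h2]
        linear_combination (-(-1:ℝ)^i) * h'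
      rw [key2, hp']
      field_simp
      ring
    simp_rw [key, Finset.sum_add_distrib, Finset.sum_sub_distrib]
    have e1 : ∑ i ∈ range (m+3), (-1:ℝ)^i * ((m+1).choose (i+1) : ℝ) / ((i:ℝ)+1)
        = harm (m+1) := by
      rw [show m+3 = (m+2)+1 from rfl, Finset.sum_range_succ,
        Nat.choose_eq_zero_of_lt (by omega : m+1 < m+2+1), ← altA (m+1)]
      norm_num
    have e2 : ∑ i ∈ range (m+3), ((-1:ℝ)^i * (((m+2).choose (i+2) : ℕ) : ℝ)) / ((m:ℝ)+2)
        = ((m:ℝ)+1) / ((m:ℝ)+2) := by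
      rw [← Finset.sum_div]
      have := alt2 (m+1)
      push_cast at this ⊢
      rw [show m+1+2 = m+3 from rfl] at this
      rw [this]
    have e3 : ∑ i ∈ range (m+3), (-1:ℝ)^i * ((m+1).choose (i+2) : ℝ) / (((i:ℝ)+2)*((i:ℝ)+1))
        = ((m:ℝ)+2) * harm m - 2*((m:ℝ)+1) + 1 + 1/((m:ℝ)+1) := by
      rw [show m+3 = (m+2)+1 from rfl, Finset.sum_range_succ,
        Nat.choose_eq_zero_of_lt (by omega : m+1 < m+2+2), ← ih]
      norm_num
    rw [e1, e2, e3, harm_succ]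
    have h1 : ((m:ℝ)+1) ≠ 0 := by positivity
    have h2 : ((m:ℝ)+2) ≠ 0 := by positivity
    push_cast
    field_simp
    ring

lemma integrableOn_x_exp {a : ℝ} (ha : 0 < a) :
    IntegrableOn (fun x : ℝ ↦ x * Real.exp (-(a*x))) (Set.Ioi 0) := by
  have h := integrableOn_rpow_mul_exp_neg_mul_rpow (s := 1) (p := 1) (b := a)
    (by norm_num) one_pos ha
  refine h.congr_fun (fun x hx ↦ ?_) measurableSet_Ioi
  simp only [Real.rpow_one, neg_mul]

lemma integrableOn_x2_exp :
    IntegrableOn (fun x : ℝ ↦ x^2 * Real.exp (-x)) (Set.Ioi 0) := by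
  have h := integrableOn_rpow_mul_exp_neg_mul_rpow (s := 2) (p := 1) (b := 1)
    (by norm_num) one_pos one_pos
  refine h.congr_fun (fun x hx ↦ ?_) measurableSet_Ioi
  simp only [Real.rpow_one, neg_mul, one_mul,
    show (2:ℝ) = ((2:ℕ):ℝ) by norm_num, Real.rpow_natCast]

lemma integral_x_exp {a : ℝ} (ha : 0 < a) :
    ∫ x in Set.Ioi (0:ℝ), x * Real.exp (-(a*x)) = 1/a^2 := by
  have h := Real.integral_rpow_mul_exp_neg_mul_Ioi (a := 2) (r := a) two_pos ha
  rw [show (2:ℝ)-1 = 1 by norm_num] at h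
  simp_rw [Real.rpow_one] at h
  rw [h, Real.Gamma_two, mul_one, show (2:ℝ) = ((2:ℕ):ℝ) by norm_num,
    Real.rpow_natCast, div_pow, one_pow]

lemma integral_x2_exp :
    ∫ x in Set.Ioi (0:ℝ), x^2 * Real.exp (-x) = 2 := by
  have h := Real.integral_rpow_mul_exp_neg_mul_Ioi (a := 3) (r := 1) (by norm_num) one_pos
  rw [show (3:ℝ)-1 = ((2:ℕ):ℝ) by norm_num] at h
  simp_rw [Real.rpow_natCast, one_mul] at h
  rw [h, show (3:ℝ) = ((2:ℕ):ℝ)+1 by norm_num, Real.Gamma_nat_eq_factorial]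
  norm_num

/-- The expected size of the file generating the most traffic among `n` files:
`∫_0^∞ x [n e^{-x}(x - H_{n-1}) + ∑_{j=2}^n (-1)^j C(n,j)(j/(j-1)) e^{-jx}] dx
  = 1 + 1/n + H_{n-1}`, and for `n ≥ 2` this value `E_max(n)` satisfies
`1 + 1/n + γ + log(n-1) < E_max(n) < 1 + 1/n + γ + log n`, where `γ` is the
Euler–Mascheroni constant. -/
theorem expected_size_of_most_important_file (n : ℕ) (hn : 1 ≤ n) :
    (∫ x in Set.Ioi (0:ℝ),
        x * ((n : ℝ) * Real.exp (-x) * (x - harm (n - 1))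
          + ∑ j ∈ Finset.Icc 2 n,
              (-1 : ℝ) ^ j * (n.choose j : ℝ) * ((j : ℝ) / ((j : ℝ) - 1))
                * Real.exp (-((j : ℝ) * x))))
      = 1 + 1 / (n : ℝ) + harm (n - 1)
    ∧ (2 ≤ n →
        1 + 1 / (n : ℝ) + Real.eulerMascheroniConstant + Real.log ((n : ℝ) - 1)
            < 1 + 1 / (n : ℝ) + harm (n - 1)
        ∧ 1 + 1 / (n : ℝ) + harm (n - 1)
            < 1 + 1 / (n : ℝ) + Real.eulerMascheroniConstant
                + Real.log (n : ℝ)) := by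
  obtain ⟨m, rfl⟩ : ∃ m, n = m + 1 := ⟨n - 1, (Nat.succ_pred_eq_of_pos hn).symm⟩
  simp only [Nat.add_sub_cancel]
  constructor
  · -- the integral computation
    set H := harm m with hH
    set c : ℕ → ℝ := fun j => (-1:ℝ)^j * ((m+1).choose j : ℝ) * ((j:ℝ)/((j:ℝ)-1)) with hc
    have hfun : Set.EqOn
        (fun x : ℝ => x * (((m+1:ℕ):ℝ) * Real.exp (-x) * (x - H)
          + ∑ j ∈ Finset.Icc 2 (m+1), c j * Real.exp (-((j:ℝ)*x))))
        (fun x : ℝ => (((m+1:ℕ):ℝ) * (x^2 * Real.exp (-x))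
            + (-(((m+1:ℕ):ℝ) * H)) * (x * Real.exp (-x)))
          + ∑ j ∈ Finset.Icc 2 (m+1), c j * (x * Real.exp (-((j:ℝ)*x))))
        (Set.Ioi 0) := by
      intro x _
      simp only
      rw [mul_add, Finset.mul_sum]
      congr 1
      · ring
      · exact Finset.sum_congr rfl fun j _ => by ring
    rw [setIntegral_congr_fun measurableSet_Ioi hfun]
    have h2' := integrableOn_x_exp (a := (1:ℝ)) one_pos
    simp only [one_mul] at h2'
    have hI1 : IntegrableOn (fun x : ℝ => ((m+1:ℕ):ℝ) * (x^2 * Real.exp (-x))) (Set.Ioi 0) :=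
      integrableOn_x2_exp.const_mul _
    have hI2 : IntegrableOn (fun x : ℝ => (-(((m+1:ℕ):ℝ) * H)) * (x * Real.exp (-x)))
        (Set.Ioi 0) := h2'.const_mul _
    have hIj : ∀ j ∈ Finset.Icc 2 (m+1), IntegrableOn
        (fun x : ℝ => c j * (x * Real.exp (-((j:ℝ)*x)))) (Set.Ioi 0) := by
      intro j hj
      have hj2 : 2 ≤ j := (Finset.mem_Icc.mp hj).1
      have hjpos : (0:ℝ) < (j:ℝ) := by
        have : 0 < j := by omega
        exact_mod_cast this
      exact (integrableOn_x_exp hjpos).const_mul _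
    have hI12 : IntegrableOn (fun x : ℝ => ((m+1:ℕ):ℝ) * (x^2 * Real.exp (-x))
        + (-(((m+1:ℕ):ℝ) * H)) * (x * Real.exp (-x))) (Set.Ioi 0) := hI1.add hI2
    rw [integral_add hI12 (integrable_finset_sum _ hIj),
      integral_add hI1 hI2, integral_finset_sum _ hIj]
    simp_rw [MeasureTheory.integral_const_mul]
    rw [integral_x2_exp]
    have hx1 : ∫ x in Set.Ioi (0:ℝ), x * Real.exp (-x) = 1 := by
      have := integral_x_exp (a := (1:ℝ)) one_pos
      simpa using this
    rw [hx1]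
    have hxj : ∀ j ∈ Finset.Icc 2 (m+1),
        c j * ∫ x in Set.Ioi (0:ℝ), x * Real.exp (-((j:ℝ)*x)) = c j * (1/((j:ℝ))^2) := by
      intro j hj
      have hj2 : 2 ≤ j := (Finset.mem_Icc.mp hj).1
      have hjpos : (0:ℝ) < (j:ℝ) := by
        have : 0 < j := by omega
        exact_mod_cast this
      rw [integral_x_exp hjpos]
    rw [Finset.sum_congr rfl hxj]
    have hsum : ∑ j ∈ Finset.Icc 2 (m+1), c j * (1/((j:ℝ))^2)
        = ∑ i ∈ range (m+2),
            (-1:ℝ)^i * ((m+1).choose (i+2) : ℝ) / (((i:ℝ)+2)*((i:ℝ)+1)) := by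
      rw [← Finset.Ico_add_one_right_eq_Icc, Finset.sum_Ico_eq_sum_range]
      have hcard : m + 1 + 1 - 2 = m := by omega
      rw [hcard]
      have hterm : ∀ i ∈ range m, c (2+i) * (1/(((2+i:ℕ):ℝ))^2)
          = (-1:ℝ)^i * ((m+1).choose (i+2) : ℝ) / (((i:ℝ)+2)*((i:ℝ)+1)) := by
        intro i _
        rw [hc]
        simp only
        rw [Nat.add_comm 2 i]
        have h1 : ((i:ℝ)+1) ≠ 0 := by positivity
        have h2 : ((i:ℝ)+2) ≠ 0 := by positivity
        have hpow : (-1:ℝ)^(i+2) = (-1:ℝ)^i := by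
          rw [pow_add]; norm_num
        push_cast
        rw [hpow]
        have h3 : ((i:ℝ)+2) - 1 = (i:ℝ)+1 := by ring
        rw [h3]
        field_simp
      rw [Finset.sum_congr rfl hterm]
      rw [show m+2 = (m+1)+1 from rfl, Finset.sum_range_succ, Finset.sum_range_succ,
        Nat.choose_eq_zero_of_lt (by omega : m+1 < m+2),
        Nat.choose_eq_zero_of_lt (by omega : m+1 < m+1+2)]
      norm_num
    rw [hsum, Ssum m]
    have h1 : ((m:ℝ)+1) ≠ 0 := by positivity
    push_cast
    field_simp
    ring
  · -- the inequalities
    intro h2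
    have hm1 : 1 ≤ m := by omega
    have hmne : m ≠ 0 := by omega
    have hharm : harm m = (harmonic m : ℝ) := harm_eq_harmonic m
    constructor
    · have hlt := Real.eulerMascheroniConstant_lt_eulerMascheroniSeq' m
      rw [Real.eulerMascheroniSeq', if_neg hmne] at hlt
      have hmpos : (0:ℝ) < (m:ℝ) := by exact_mod_cast Nat.pos_of_ne_zero hmne
      have hcast : ((m+1:ℕ):ℝ) - 1 = (m:ℝ) := by push_cast; ring
      rw [hcast, hharm]
      linarith
    · have hlt := Real.eulerMascheroniSeq_lt_eulerMascheroniConstant m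
      rw [Real.eulerMascheroniSeq] at hlt
      rw [hharm]
      have hcast : Real.log (((m+1:ℕ)):ℝ) = Real.log ((m:ℝ)+1) := by push_cast; ring_nf
      rw [hcast]
      linarith
end
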